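/- arXiv:1912.00516 — 4 statements merged into one kernel-verified Lean document; each statement's English description precedes it below -/
import Mathlib

section
/- Let G be a graph with no star cutset and let (X1, X2, A1, A2, B1, B2) be a split of a minimally-sided 2-join of G with minimal side X1. Then |A1| ≥ 2 and |B1| ≥ 2, and every vertex of A2 ∪ B2 has degree at least 3 in G. -/
open SimpleGraph

universe u

variable {V : Type u}

/-- A hole: a chordless cycle of length at least 4. -/
def IsHole (G : SimpleGraph V) {v : V} (c : G.Walk v v) : Prop :=
  c.IsCycle ∧ 4 ≤ c.length ∧
    ∀ x ∈ c.support, ∀ y ∈ c.support, G.Adj x y → s(x, y) ∈ c.edges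

/-- There is a hole of `G` passing through both `u` and `v`. -/
def HasHoleThrough (G : SimpleGraph V) (u v : V) : Prop :=
  ∃ (w : V) (c : G.Walk w w), IsHole G c ∧ u ∈ c.support ∧ v ∈ c.support

/-- `G` contains a theta as an induced subgraph: three internally vertex-disjoint
paths of length at least 2 between two distinct vertices, with no further edges
among the vertices of the three paths. -/
def ContainsTheta (G : SimpleGraph V) : Prop :=
  ∃ (a b : V) (P₁ P₂ P₃ : G.Walk a b),
    a ≠ b ∧ P₁.IsPath ∧ P₂.IsPath ∧ P₃.IsPath ∧
    2 ≤ P₁.length ∧ 2 ≤ P₂.length ∧ 2 ≤ P₃.length ∧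
    (∀ x ∈ P₁.support, x ∈ P₂.support → x = a ∨ x = b) ∧
    (∀ x ∈ P₁.support, x ∈ P₃.support → x = a ∨ x = b) ∧
    (∀ x ∈ P₂.support, x ∈ P₃.support → x = a ∨ x = b) ∧
    (∀ x y : V, (x ∈ P₁.support ∨ x ∈ P₂.support ∨ x ∈ P₃.support) →
      (y ∈ P₁.support ∨ y ∈ P₂.support ∨ y ∈ P₃.support) → G.Adj x y →
      s(x, y) ∈ P₁.edges ∨ s(x, y) ∈ P₂.edges ∨ s(x, y) ∈ P₃.edges)

/-- `G` contains a wheel as an induced subgraph: a hole together with a vertex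
having at least 3 neighbors on the hole. -/
def ContainsWheel (G : SimpleGraph V) : Prop :=
  ∃ (w : V) (c : G.Walk w w) (x y₁ y₂ y₃ : V),
    IsHole G c ∧ x ∉ c.support ∧
    y₁ ∈ c.support ∧ y₂ ∈ c.support ∧ y₃ ∈ c.support ∧
    y₁ ≠ y₂ ∧ y₁ ≠ y₃ ∧ y₂ ≠ y₃ ∧ G.Adj x y₁ ∧ G.Adj x y₂ ∧ G.Adj x y₃

/-- `G` contains a diamond (K₄ minus an edge) as an induced subgraph. -/
def ContainsDiamond (G : SimpleGraph V) : Prop :=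
  ∃ a b c d : V, a ≠ b ∧ a ≠ c ∧ a ≠ d ∧ b ≠ c ∧ b ≠ d ∧ c ≠ d ∧
    ¬ G.Adj a b ∧ G.Adj a c ∧ G.Adj a d ∧ G.Adj b c ∧ G.Adj b d ∧ G.Adj c d

/-- `G` contains a claw (K_{1,3}) as an induced subgraph. -/
def ContainsClaw (G : SimpleGraph V) : Prop :=
  ∃ u v₁ v₂ v₃ : V, v₁ ≠ v₂ ∧ v₁ ≠ v₃ ∧ v₂ ≠ v₃ ∧
    G.Adj u v₁ ∧ G.Adj u v₂ ∧ G.Adj u v₃ ∧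
    ¬ G.Adj v₁ v₂ ∧ ¬ G.Adj v₁ v₃ ∧ ¬ G.Adj v₂ v₃

/-- `(A, K, B)` is a split witnessing that `K` is a cutset of `G`:
`A` and `B` are nonempty, the three sets partition the vertex set,
and there are no edges between `A` and `B`. -/
def IsCutsetSplit (G : SimpleGraph V) (A K B : Set V) : Prop :=
  A.Nonempty ∧ B.Nonempty ∧ Disjoint A K ∧ Disjoint A B ∧ Disjoint K B ∧
    A ∪ K ∪ B = Set.univ ∧ ∀ a ∈ A, ∀ b ∈ B, ¬ G.Adj a b

/-- `G` has a clique cutset. -/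
def HasCliqueCutset (G : SimpleGraph V) : Prop :=
  ∃ K A B : Set V, G.IsClique K ∧ IsCutsetSplit G A K B

/-- Some clique cutset of `G` separates `u` and `v`. -/
def CliqueCutsetSeparates (G : SimpleGraph V) (u v : V) : Prop :=
  ∃ K A B : Set V, G.IsClique K ∧ IsCutsetSplit G A K B ∧ u ∈ A ∧ v ∈ B

/-- `G` has a star cutset: a nonempty cutset containing a vertex adjacent to
all other vertices of the cutset. -/
def HasStarCutset (G : SimpleGraph V) : Prop :=
  ∃ S A B : Set V, S.Nonempty ∧ IsCutsetSplit G A S B ∧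
    ∃ x ∈ S, ∀ y ∈ S, y ≠ x → G.Adj x y

/-- `u` and `v` are joined by a walk all of whose vertices lie in `X`. -/
def ReachableWithin (G : SimpleGraph V) (X : Set V) (u v : V) : Prop :=
  ∃ p : G.Walk u v, ∀ x ∈ p.support, x ∈ X

/-- `C` is a connected component of the subgraph of `G` induced by `X`. -/
def IsCompOf (G : SimpleGraph V) (X C : Set V) : Prop :=
  C.Nonempty ∧ C ⊆ X ∧ (∀ u ∈ C, ∀ v ∈ C, ReachableWithin G X u v) ∧
    ∀ u ∈ C, ∀ v ∈ X, G.Adj u v → v ∈ C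

/-- The subgraph of `G` induced by `A` is a disjoint union of cliques. -/
def UnionOfCliques (G : SimpleGraph V) (A : Set V) : Prop :=
  ∀ x ∈ A, ∀ y ∈ A, ∀ z ∈ A, G.Adj x y → G.Adj y z → x ≠ z → G.Adj x z

/-- `(X₁, X₂, A₁, A₂, B₁, B₂)` is a split of an almost 2-join of `G`. -/
def AlmostTwoJoinSplit (G : SimpleGraph V) (X₁ X₂ A₁ A₂ B₁ B₂ : Set V) : Prop :=
  Disjoint X₁ X₂ ∧ X₁ ∪ X₂ = Set.univ ∧ 3 ≤ X₁.ncard ∧ 3 ≤ X₂.ncard ∧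
  A₁.Nonempty ∧ B₁.Nonempty ∧ A₂.Nonempty ∧ B₂.Nonempty ∧
  A₁ ⊆ X₁ ∧ B₁ ⊆ X₁ ∧ A₂ ⊆ X₂ ∧ B₂ ⊆ X₂ ∧
  Disjoint A₁ B₁ ∧ Disjoint A₂ B₂ ∧
  (∀ a ∈ A₁, ∀ b ∈ A₂, G.Adj a b) ∧
  (∀ a ∈ B₁, ∀ b ∈ B₂, G.Adj a b) ∧
  (∀ x ∈ X₁, ∀ y ∈ X₂, G.Adj x y → (x ∈ A₁ ∧ y ∈ A₂) ∨ (x ∈ B₁ ∧ y ∈ B₂))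

/-- The subgraph of `G` induced by `X` is a chordless path. -/
def InducesPath (G : SimpleGraph V) (X : Set V) : Prop :=
  ∃ (u v : V) (p : G.Walk u v), p.IsPath ∧ (∀ x : V, x ∈ p.support ↔ x ∈ X) ∧
    ∀ x ∈ X, ∀ y ∈ X, G.Adj x y → s(x, y) ∈ p.edges

/-- `(X₁, X₂, A₁, A₂, B₁, B₂)` is a split of a 2-join of `G`. -/
def TwoJoinSplit (G : SimpleGraph V) (X₁ X₂ A₁ A₂ B₁ B₂ : Set V) : Prop :=
  AlmostTwoJoinSplit G X₁ X₂ A₁ A₂ B₁ B₂ ∧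
  (∃ a ∈ A₁, ∃ b ∈ B₁, ReachableWithin G X₁ a b) ∧
  (∃ a ∈ A₂, ∃ b ∈ B₂, ReachableWithin G X₂ a b) ∧
  (A₁.ncard = 1 → B₁.ncard = 1 → ¬ InducesPath G X₁) ∧
  (A₂.ncard = 1 → B₂.ncard = 1 → ¬ InducesPath G X₂)

/-- `(X₁, X₂, A₁, A₂, B₁, B₂)` is a split of a minimally-sided 2-join of `G`,
with `X₁` a minimal side. -/
def MinimallySidedTwoJoin (G : SimpleGraph V) (X₁ X₂ A₁ A₂ B₁ B₂ : Set V) : Prop :=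
  TwoJoinSplit G X₁ X₂ A₁ A₂ B₁ B₂ ∧
  ∀ Y₁ Y₂ C₁ C₂ D₁ D₂ : Set V, TwoJoinSplit G Y₁ Y₂ C₁ C₂ D₁ D₂ →
    ¬ Y₁ ⊂ X₁ ∧ ¬ Y₂ ⊂ X₁

/-- Conditions (i)–(iii) and (vi)–(viii) of consistency of an almost 2-join,
for the side `X` with special sets `A` and `B`. -/
def ConsistentSide (G : SimpleGraph V) (X A B : Set V) : Prop :=
  (∀ C : Set V, IsCompOf G X C → (C ∩ A).Nonempty ∧ (C ∩ B).Nonempty) ∧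
  (∀ a ∈ A, ∃ b ∈ B, ¬ G.Adj a b) ∧
  (∀ b ∈ B, ∃ a ∈ A, ¬ G.Adj b a) ∧
  (∀ u ∈ X, ∀ v ∈ X, ReachableWithin G X u v) ∧
  (∀ v ∈ X, ∃ b ∈ B, ∃ p : G.Walk v b, p.IsPath ∧ (∀ x ∈ p.support, x ∈ X) ∧
    ∀ x ∈ p.support, x ∈ A → x = v ∨ x = b) ∧
  (∀ v ∈ X, ∃ a ∈ A, ∃ p : G.Walk v a, p.IsPath ∧ (∀ x ∈ p.support, x ∈ X) ∧
    ∀ x ∈ p.support, x ∈ B → x = v ∨ x = a)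

/-- The block of decomposition of `G` with respect to a 2-join, keeping the side `X`
(with special sets `A`, `B`) and replacing the other side by a marker path of
length `k` whose endpoint `0` is complete to `A` and endpoint `k` is complete to `B`. -/
def TwoJoinBlock (G : SimpleGraph V) (X A B : Set V) (k : ℕ) :
    SimpleGraph (↥X ⊕ Fin (k + 1)) where
  Adj x y :=
    match x, y with
    | Sum.inl a, Sum.inl b => G.Adj ↑a ↑b
    | Sum.inl a, Sum.inr i => ((a : V) ∈ A ∧ i = 0) ∨ ((a : V) ∈ B ∧ i = Fin.last k)
    | Sum.inr i, Sum.inl a => ((a : V) ∈ A ∧ i = 0) ∨ ((a : V) ∈ B ∧ i = Fin.last k)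
    | Sum.inr i, Sum.inr j => (i : ℕ) + 1 = (j : ℕ) ∨ (j : ℕ) + 1 = (i : ℕ)
  symm := by
    constructor
    rintro (a | i) (b | j) h
    · exact h.symm
    · exact h
    · exact h
    · exact Or.symm h
  loopless := by
    constructor
    rintro (a | i) h
    · exact G.irrefl h
    · rcases h with h | h <;> omega

/-- A graph is chordless if no cycle in it has a chord. -/
def ChordlessGraph (G : SimpleGraph V) : Prop :=
  ∀ (u : V) (c : G.Walk u u), c.IsCycle →
    ∀ x ∈ c.support, ∀ y ∈ c.support, G.Adj x y → s(x, y) ∈ c.edges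

/-- The subgraph of `G` induced by `S` has a clique cutset. -/
def HasCliqueCutsetOn (G : SimpleGraph V) (S : Set V) : Prop :=
  ∃ K A B : Set V, G.IsClique K ∧ A.Nonempty ∧ B.Nonempty ∧ Disjoint A K ∧
    Disjoint A B ∧ Disjoint K B ∧ A ∪ K ∪ B = S ∧ ∀ a ∈ A, ∀ b ∈ B, ¬ G.Adj a b

/-- The total weight of a set of vertices. -/
noncomputable def wsum [Fintype V] (w : V → ℕ) (A : Set V) : ℕ :=
  ∑ v ∈ A.toFinite.toFinset, w v

section Helpers
variable {V : Type u}

private lemma walk_first_step {G : SimpleGraph V} {u v : V} (p : G.Walk u v) (hp : p.IsPath)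
    (hne : u ≠ v) : ∃ (w : V) (q : G.Walk w v), G.Adj u w ∧ q.IsPath ∧
      (∀ x, x ∈ p.support ↔ x = u ∨ x ∈ q.support) ∧ u ∉ q.support ∧
      (∀ E, E ∈ p.edges ↔ E = s(u, w) ∨ E ∈ q.edges) := by
  cases p with
  | nil => exact absurd rfl hne
  | cons h q =>
    rw [Walk.cons_isPath_iff] at hp
    exact ⟨_, q, h, hp.1, fun x => by simp, hp.2, fun E => by simp⟩

private lemma path_start_nbr_unique {G : SimpleGraph V} {u v x y : V} (p : G.Walk u v)
    (hp : p.IsPath) (hx : s(u, x) ∈ p.edges) (hy : s(u, y) ∈ p.edges) : x = y := by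
  cases p with
  | nil => simp at hx
  | cons h q =>
    rename_i w
    rw [Walk.cons_isPath_iff] at hp
    have key : ∀ z : V, s(u, z) ∈ (Walk.cons h q).edges → z = w := by
      intro z hz
      rw [Walk.edges_cons, List.mem_cons] at hz
      rcases hz with hz | hz
      · rw [Sym2.eq_iff] at hz
        rcases hz with ⟨-, hz⟩ | ⟨hz, -⟩
        · exact hz
        · exact absurd (hz ▸ h) G.irrefl
      · exact absurd (Walk.fst_mem_support_of_mem_edges q hz) hp.2
    rw [key x hx, key y hy]

private lemma endpoint_unique {G : SimpleGraph V} {S : Set V} {u v : V}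
    (p : G.Walk u v) (hp : p.IsPath) (hne : u ≠ v)
    (hsupp : ∀ x, x ∈ p.support ↔ x ∈ S)
    (hind : ∀ x ∈ S, ∀ y ∈ S, G.Adj x y → s(x, y) ∈ p.edges) :
    ∃ w ∈ S, G.Adj u w ∧ ∀ x ∈ S, G.Adj u x → x = w := by
  obtain ⟨w, q, hadj, -, hsupp2, -, hedge⟩ := walk_first_step p hp hne
  refine ⟨w, (hsupp w).1 ((hsupp2 w).2 (Or.inr q.start_mem_support)), hadj, ?_⟩
  intro x hx hux
  have h1 : s(u, x) ∈ p.edges := hind u ((hsupp u).1 p.start_mem_support) x hx hux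
  have h2 : s(u, w) ∈ p.edges := (hedge _).2 (Or.inl rfl)
  exact path_start_nbr_unique p hp h1 h2

private lemma rev_supp {G : SimpleGraph V} {u v : V} (p : G.Walk u v) (x : V) :
    x ∈ p.reverse.support ↔ x ∈ p.support := by
  rw [Walk.support_reverse, List.mem_reverse]

private lemma rev_edges {G : SimpleGraph V} {u v : V} (p : G.Walk u v) (E : Sym2 V) :
    E ∈ p.reverse.edges ↔ E ∈ p.edges := by
  rw [Walk.edges_reverse, List.mem_reverse]

private lemma loop_path_supp {G : SimpleGraph V} {u : V} (p : G.Walk u u) (hp : p.IsPath) :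
    ∀ x ∈ p.support, x = u := by
  cases p with
  | nil => intro x hx; simpa using hx
  | cons h q =>
    rw [Walk.cons_isPath_iff] at hp
    exact absurd q.end_mem_support hp.2

private lemma induced_path_endpoints [Fintype V] {G : SimpleGraph V} {S : Set V}
    (hip : InducesPath G S) (h3 : 3 ≤ S.ncard) :
    ∃ (u v : V) (p : G.Walk u v), u ≠ v ∧ p.IsPath ∧
      (∀ x, x ∈ p.support ↔ x ∈ S) ∧
      (∀ x ∈ S, ∀ y ∈ S, G.Adj x y → s(x, y) ∈ p.edges) ∧
      (∃ w ∈ S, G.Adj u w ∧ ∀ x ∈ S, G.Adj u x → x = w) ∧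
      (∃ w ∈ S, G.Adj v w ∧ ∀ x ∈ S, G.Adj v x → x = w) := by
  obtain ⟨u, v, p, hp, hsupp, hind⟩ := hip
  have hne : u ≠ v := by
    rintro rfl
    have hS : S ⊆ {u} := fun x hx => loop_path_supp p hp x ((hsupp x).2 hx)
    have := Set.ncard_le_ncard hS (Set.toFinite _)
    rw [Set.ncard_singleton] at this
    omega
  refine ⟨u, v, p, hne, hp, hsupp, hind, endpoint_unique p hp hne hsupp hind, ?_⟩
  have hsupp' : ∀ x, x ∈ p.reverse.support ↔ x ∈ S := fun x => (rev_supp p x).trans (hsupp x)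
  have hind' : ∀ x ∈ S, ∀ y ∈ S, G.Adj x y → s(x, y) ∈ p.reverse.edges :=
    fun x hx y hy hxy => (rev_edges p _).2 (hind x hx y hy hxy)
  exact endpoint_unique p.reverse hp.reverse hne.symm hsupp' hind'

private lemma extend_induced {G : SimpleGraph V} {S : Set V} {a u v : V}
    (p : G.Walk u v) (hp : p.IsPath)
    (hsupp : ∀ x, x ∈ p.support ↔ x ∈ S)
    (hind : ∀ x ∈ S, ∀ y ∈ S, G.Adj x y → s(x, y) ∈ p.edges)
    (ha : a ∉ S) (hadj : G.Adj a u)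
    (honly : ∀ x ∈ S, G.Adj a x → x = u) :
    InducesPath G (insert a S) := by
  refine ⟨a, v, Walk.cons hadj p, ?_, ?_, ?_⟩
  · rw [Walk.cons_isPath_iff]; exact ⟨hp, fun h => ha ((hsupp a).1 h)⟩
  · intro x
    rw [Walk.support_cons, List.mem_cons, Set.mem_insert_iff, hsupp x]
  · intro x hx y hy hxy
    rw [Walk.edges_cons, List.mem_cons]
    rcases Set.mem_insert_iff.1 hx with hxa | hx2
    · rcases Set.mem_insert_iff.1 hy with hya | hy2
      · exact absurd (hya ▸ hxa ▸ hxy) G.irrefl.elim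
      · left; rw [hxa, honly y hy2 (hxa ▸ hxy)]
    · rcases Set.mem_insert_iff.1 hy with hya | hy2
      · left; rw [hya, Sym2.eq_swap, honly x hx2 (hya ▸ hxy).symm]
      · exact Or.inr (hind x hx2 y hy2 hxy)

private lemma three_diff_pair [Fintype V] (X : Set V) (e w : V) (h3 : 3 ≤ X.ncard) :
    (X \ {e, w}).Nonempty := by
  rw [Set.nonempty_iff_ne_empty]
  intro h
  have hX : X ⊆ {e, w} := fun x hx => by
    by_contra hc; exact Set.eq_empty_iff_forall_notMem.mp h x ⟨hx, hc⟩
  have h1 := Set.ncard_le_ncard hX (Set.toFinite _)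
  have h2 : ({e, w} : Set V).ncard ≤ 2 := by
    refine le_trans (Set.ncard_insert_le _ _) ?_
    simp [Set.ncard_singleton]
  omega

private lemma mk_starcut (G : SimpleGraph V) (P S Q : Set V) (x : V)
    (hP : P.Nonempty) (hQ : Q.Nonempty)
    (hPS : Disjoint P S) (hPQ : Disjoint P Q) (hSQ : Disjoint S Q)
    (hU : P ∪ S ∪ Q = Set.univ)
    (hE : ∀ a ∈ P, ∀ b ∈ Q, ¬ G.Adj a b)
    (hx : x ∈ S) (hstar : ∀ y ∈ S, y ≠ x → G.Adj x y) : HasStarCutset G :=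
  ⟨S, P, Q, ⟨x, hx⟩, ⟨hP, hQ, hPS, hPQ, hSQ, hU, hE⟩, x, hx, hstar⟩

private lemma starcut_isolate (G : SimpleGraph V) (S : Set V) (x v : V)
    (hx : x ∈ S) (hstar : ∀ y ∈ S, y ≠ x → G.Adj x y) (hvS : v ∉ S)
    (hNv : ∀ y, G.Adj v y → y ∈ S)
    (hne : (Set.univ \ insert v S).Nonempty) : HasStarCutset G := by
  refine mk_starcut G {v} S (Set.univ \ insert v S) x ⟨v, rfl⟩ hne ?_ ?_ ?_ ?_ ?_ hx hstar
  · exact Set.disjoint_singleton_left.2 hvS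
  · exact Set.disjoint_singleton_left.2 (fun h => h.2 (Set.mem_insert v S))
  · exact Set.disjoint_left.2 (fun a ha h => h.2 (Set.mem_insert_of_mem v ha))
  · ext z
    simp only [Set.mem_union, Set.mem_singleton_iff, Set.mem_diff, Set.mem_univ,
      Set.mem_insert_iff, true_and, iff_true]
    by_cases h1 : z = v
    · exact Or.inl (Or.inl h1)
    · by_cases h2 : z ∈ S
      · exact Or.inl (Or.inr h2)
      · exact Or.inr (fun h => by tauto)
  · intro a ha b hb hab
    rw [Set.mem_singleton_iff] at ha
    exact hb.2 (Set.mem_insert_of_mem _ (hNv b (ha ▸ hab)))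

private lemma rw_symm {G : SimpleGraph V} {X : Set V} {u v : V}
    (h : ReachableWithin G X u v) : ReachableWithin G X v u := by
  obtain ⟨p, hp⟩ := h
  exact ⟨p.reverse, fun x hx => hp x ((rev_supp p x).1 hx)⟩

private lemma twojoin_swapAB {G : SimpleGraph V} {X₁ X₂ A₁ A₂ B₁ B₂ : Set V}
    (h : TwoJoinSplit G X₁ X₂ A₁ A₂ B₁ B₂) : TwoJoinSplit G X₁ X₂ B₁ B₂ A₁ A₂ := by
  obtain ⟨⟨h1, h2, h3, h4, h5, h6, h7, h8, h9, h10, h11, h12, h13, h14, h15, h16, h17⟩,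
    hr1, hr2, hp1, hp2⟩ := h
  refine ⟨⟨h1, h2, h3, h4, h6, h5, h8, h7, h10, h9, h12, h11, h13.symm, h14.symm, h16, h15,
    fun x hx y hy hxy => (h17 x hx y hy hxy).symm⟩, ?_, ?_,
    fun hb ha => hp1 ha hb, fun hb ha => hp2 ha hb⟩
  · obtain ⟨a, ha, b, hb, hw⟩ := hr1
    exact ⟨b, hb, a, ha, rw_symm hw⟩
  · obtain ⟨a, ha, b, hb, hw⟩ := hr2
    exact ⟨b, hb, a, ha, rw_symm hw⟩

private lemma minsided_swapAB {G : SimpleGraph V} {X₁ X₂ A₁ A₂ B₁ B₂ : Set V}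
    (h : MinimallySidedTwoJoin G X₁ X₂ A₁ A₂ B₁ B₂) :
    MinimallySidedTwoJoin G X₁ X₂ B₁ B₂ A₁ A₂ :=
  ⟨twojoin_swapAB h.1, h.2⟩

private lemma deg_ge_three [Fintype V] {G : SimpleGraph V}
    (hStar : ¬ HasStarCutset G) {X₁ X₂ A₁ A₂ B₁ B₂ : Set V}
    (hTJ : TwoJoinSplit G X₁ X₂ A₁ A₂ B₁ B₂) (hA1 : 2 ≤ A₁.ncard)
    (v : V) (hv : v ∈ A₂) : 3 ≤ (G.neighborSet v).ncard := by
  obtain ⟨⟨h1, h2, h3, h4, h5, h6, h7, h8, h9, h10, h11, h12, h13, h14, h15, h16, h17⟩,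
    hr1, hr2, hp1, hp2⟩ := hTJ
  have hvX₂ : v ∈ X₂ := h11 hv
  by_cases hx2 : ∃ x₂ ∈ X₂, G.Adj v x₂
  · obtain ⟨x₂, hx₂, hadj⟩ := hx2
    have hsub : insert x₂ A₁ ⊆ G.neighborSet v := by
      rintro y (rfl | hy)
      · exact hadj
      · exact (h15 y hy v hv).symm
    have hx₂A₁ : x₂ ∉ A₁ := fun hc => h1.ne_of_mem (h9 hc) hx₂ rfl
    have hcard : (insert x₂ A₁).ncard = A₁.ncard + 1 :=
      Set.ncard_insert_of_notMem hx₂A₁ (Set.toFinite _)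
    have := Set.ncard_le_ncard hsub (Set.toFinite _)
    omega
  · push_neg at hx2
    have hNv : ∀ y, G.Adj v y → y ∈ A₁ := by
      intro y hy
      have hyu : y ∈ X₁ ∪ X₂ := h2 ▸ Set.mem_univ y
      rcases hyu with hy1 | hy2
      · rcases h17 y hy1 v hvX₂ hy.symm with ⟨hA, -⟩ | ⟨-, hB⟩
        · exact hA
        · exact absurd hB (fun hc => h14.ne_of_mem hv hc rfl)
      · exact absurd hy (hx2 y hy2)
    by_cases hA2 : ∃ v' ∈ A₂, v' ≠ v
    · obtain ⟨v', hv', hne⟩ := hA2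
      refine absurd (starcut_isolate G (insert v' A₁) v' v (Set.mem_insert v' A₁) ?_ ?_ ?_ ?_)
        hStar
      · rintro y (rfl | hy) hne2
        · exact absurd rfl hne2
        · exact (h15 y hy v' hv').symm
      · rintro (rfl | hvA₁)
        · exact hne rfl
        · exact h1.ne_of_mem (h9 hvA₁) hvX₂ rfl
      · exact fun y hy => Set.mem_insert_of_mem v' (hNv y hy)
      · obtain ⟨b₁, hb₁⟩ := h6
        refine ⟨b₁, Set.mem_univ b₁, ?_⟩
        rintro (rfl | rfl | hb)
        · exact h1.ne_of_mem (h10 hb₁) hvX₂ rfl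
        · exact h1.ne_of_mem (h10 hb₁) (h11 hv') rfl
        · exact h13.ne_of_mem hb hb₁ rfl
    · push_neg at hA2
      obtain ⟨a₂, ha₂, b₂, hb₂, p, hp⟩ := hr2
      have hav : a₂ = v := hA2 a₂ ha₂
      subst hav
      cases p with
      | nil => exact absurd hb₂ (fun hc => h14.ne_of_mem ha₂ hc rfl)
      | cons h q =>
        rename_i w
        exact absurd h (hx2 w (hp w (by rw [Walk.support_cons]; exact List.mem_cons_of_mem _ q.start_mem_support)))

private lemma A1_two [Fintype V] {G : SimpleGraph V}
    (hStar : ¬ HasStarCutset G) {X₁ X₂ A₁ A₂ B₁ B₂ : Set V}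
    (hmin : MinimallySidedTwoJoin G X₁ X₂ A₁ A₂ B₁ B₂) : 2 ≤ A₁.ncard := by
  classical
  obtain ⟨hTJ, hminside⟩ := hmin
  obtain ⟨⟨h1, h2, h3, h4, h5, h6, h7, h8, h9, h10, h11, h12, h13, h14, h15, h16, h17⟩,
    hr1, hr2, hpath1, hpath2⟩ := hTJ
  by_contra hcon
  push_neg at hcon
  have hA1pos : 0 < A₁.ncard := (Set.ncard_pos (Set.toFinite _)).2 h5
  have hA1card : A₁.ncard = 1 := by omega
  obtain ⟨a, hA1⟩ := Set.ncard_eq_one.mp hA1card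
  have haA₁ : a ∈ A₁ := hA1 ▸ rfl
  have haX₁ : a ∈ X₁ := h9 haA₁
  have haX₂ : a ∉ X₂ := fun hc => h1.ne_of_mem haX₁ hc rfl
  have haB₁ : a ∉ B₁ := fun hc => h13.ne_of_mem haA₁ hc rfl
  -- Step 1 : a has no neighbour in B₁
  have hstep1 : ∀ b ∈ B₁, ¬ G.Adj a b := by
    intro b hb hab
    have hbX₁ : b ∈ X₁ := h10 hb
    refine hStar (mk_starcut G (X₁ \ {a, b}) ({a, b} ∪ B₂) (X₂ \ B₂) b ?_ ?_ ?_ ?_ ?_ ?_ ?_ ?_ ?_)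
    · exact three_diff_pair X₁ a b h3
    · obtain ⟨a₂, ha₂⟩ := h7
      exact ⟨a₂, h11 ha₂, fun hc => h14.ne_of_mem ha₂ hc rfl⟩
    · rw [Set.disjoint_union_right]
      refine ⟨Set.disjoint_left.2 (fun x hx hx2 => hx.2 hx2), Set.disjoint_left.2 ?_⟩
      exact fun x hx hx2 => h1.ne_of_mem hx.1 (h12 hx2) rfl
    · exact Set.disjoint_of_subset Set.diff_subset Set.diff_subset h1
    · rw [Set.disjoint_union_left]
      constructor
      · refine Set.disjoint_left.2 ?_
        rintro x (rfl | hx) hx2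
        · exact haX₂ hx2.1
        · rw [Set.mem_singleton_iff] at hx; subst hx; exact h1.ne_of_mem hbX₁ hx2.1 rfl
      · exact Set.disjoint_left.2 (fun x hx hx2 => hx2.2 hx)
    · ext z
      simp only [Set.mem_union, Set.mem_diff, Set.mem_univ, iff_true]
      have hz : z ∈ X₁ ∪ X₂ := h2 ▸ Set.mem_univ z
      by_cases hz1 : z ∈ ({a, b} : Set V)
      · exact Or.inl (Or.inr (Or.inl hz1))
      · by_cases hz2 : z ∈ B₂
        · exact Or.inl (Or.inr (Or.inr hz2))
        · rcases hz with hz | hz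
          · exact Or.inl (Or.inl ⟨hz, hz1⟩)
          · exact Or.inr ⟨hz, hz2⟩
    · intro p hp q hq hpq
      rcases h17 p hp.1 q hq.1 hpq with ⟨hA, -⟩ | ⟨-, hB⟩
      · rw [hA1, Set.mem_singleton_iff] at hA
        exact hp.2 (Or.inl hA)
      · exact hq.2 hB
    · exact Or.inl (Or.inr rfl)
    · intro y hy hne
      rcases hy with hy | hy
      · rcases hy with hy | hy
        · rw [hy]; exact hab.symm
        · rw [Set.mem_singleton_iff] at hy; exact absurd hy hne
      · exact h16 b hb y hy
  -- Step 2 : a path from a into X₁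
  obtain ⟨a₀, ha₀, b₀, hb₀, r, hr⟩ := hr1
  have ha₀a : a₀ = a := by rw [hA1] at ha₀; exact ha₀
  subst ha₀a
  have hb₀X₁ : b₀ ∈ X₁ := h10 hb₀
  have hab₀ : a₀ ≠ b₀ := fun hc => haB₁ (hc ▸ hb₀)
  have hpsub : ∀ x ∈ (r.toPath : G.Walk a₀ b₀).support, x ∈ X₁ :=
    fun x hx => hr x (Walk.support_toPath_subset r hx)
  obtain ⟨w, q', haw, hq'path, hq'supp, haq', -⟩ :=
    walk_first_step (r.toPath : G.Walk a₀ b₀) r.toPath.isPath hab₀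
  have hwX₁ : w ∈ X₁ := hpsub w ((hq'supp w).2 (Or.inr q'.start_mem_support))
  have hq'X₁ : ∀ x ∈ q'.support, x ∈ X₁ := fun x hx => hpsub x ((hq'supp x).2 (Or.inr hx))
  have hwa : w ≠ a₀ := haw.ne'
  have hwB₁ : w ∉ B₁ := fun hc => hstep1 w hc haw
  rcases eq_or_lt_of_le h3 with heq | hlt
  · -- |X₁| = 3
    have hB₁sub : B₁ ⊆ X₁ \ {a₀} :=
      fun x hx => ⟨h10 hx, fun hc => haB₁ ((Set.mem_singleton_iff.1 hc) ▸ hx)⟩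
    have hd : (X₁ \ {a₀}).ncard = 2 := by
      rw [Set.ncard_diff_singleton_of_mem haX₁]; omega
    have hB₁le : B₁.ncard ≤ 2 := hd ▸ Set.ncard_le_ncard hB₁sub (Set.toFinite _)
    have hB₁pos : 0 < B₁.ncard := (Set.ncard_pos (Set.toFinite _)).2 h6
    have hB₁card : B₁.ncard = 1 := by
      rcases Nat.lt_or_ge B₁.ncard 2 with hc | hc
      · omega
      · exfalso
        have hBeq : B₁ = X₁ \ {a₀} :=
          Set.eq_of_subset_of_ncard_le hB₁sub (by omega) (Set.toFinite _)
        exact hwB₁ (hBeq ▸ ⟨hwX₁, fun hc2 => hwa (Set.mem_singleton_iff.1 hc2)⟩)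
    obtain ⟨b, hB₁eq⟩ := Set.ncard_eq_one.mp hB₁card
    have hbb₀ : b₀ = b := by rw [hB₁eq] at hb₀; exact hb₀
    subst hbb₀
    have hwb : w ≠ b₀ := fun hc => hwB₁ (hc ▸ hb₀)
    have hset : ({a₀, w, b₀} : Set V) = X₁ := by
      apply Set.eq_of_subset_of_ncard_le
      · rintro x (rfl | rfl | hx)
        · exact haX₁
        · exact hwX₁
        · rw [Set.mem_singleton_iff] at hx; subst hx; exact hb₀X₁
      · have hc3 : ({a₀, w, b₀} : Set V).ncard = 3 := by
          rw [Set.ncard_insert_of_notMem (by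
              rintro (rfl | hx)
              · exact hwa rfl
              · rw [Set.mem_singleton_iff] at hx; exact hab₀ hx) (Set.toFinite _),
            Set.ncard_insert_of_notMem (by
              rintro hx; rw [Set.mem_singleton_iff] at hx; exact hwb hx) (Set.toFinite _),
            Set.ncard_singleton]
        omega
      · exact Set.toFinite _
    obtain ⟨u', q'', hwu', -, hs2, hwq'', -⟩ := walk_first_step q' hq'path hwb
    have hu'q' : u' ∈ q'.support := (hs2 u').2 (Or.inr q''.start_mem_support)
    have hu'X : u' ∈ X₁ := hq'X₁ u' hu'q'
    have hu'b : u' = b₀ := by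
      have hu'mem : u' ∈ ({a₀, w, b₀} : Set V) := hset.symm ▸ hu'X
      rcases hu'mem with hc | hc | hc
      · exact absurd (hc ▸ hu'q') haq'
      · exact absurd hc hwu'.ne'
      · rwa [Set.mem_singleton_iff] at hc
    rw [hu'b] at hwu'
    have hIP : InducesPath G X₁ := by
      refine ⟨a₀, b₀, Walk.cons haw (Walk.cons hwu' Walk.nil), ?_, ?_, ?_⟩
      · rw [Walk.cons_isPath_iff, Walk.cons_isPath_iff]
        refine ⟨⟨Walk.IsPath.nil, by simp [hwb]⟩, ?_⟩
        simp only [Walk.support_cons, Walk.support_nil, List.mem_cons, List.mem_singleton]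
        rintro (hc | hc | hc)
        · exact hwa hc.symm
        · exact hab₀ hc
        · simp at hc
      · intro x
        rw [← hset]
        simp [Walk.support_cons, Walk.support_nil, Set.mem_insert_iff, Set.mem_singleton_iff]
      · intro x hx y hy hxy
        rw [← hset] at hx hy
        simp only [Walk.edges_cons, Walk.edges_nil, List.mem_cons, List.not_mem_nil,
          or_false, List.mem_singleton]
        have hsw : s(w, a₀) = s(a₀, w) := Sym2.eq_swap
        have hsb : s(b₀, w) = s(w, b₀) := Sym2.eq_swap
        rcases hx with rfl | rfl | hx
        · rcases hy with rfl | rfl | hy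
          · exact absurd hxy G.irrefl
          · exact Or.inl rfl
          · rw [Set.mem_singleton_iff] at hy; subst hy
            exact absurd hxy (hstep1 _ hb₀)
        · rcases hy with rfl | rfl | hy
          · exact Or.inl hsw
          · exact absurd hxy G.irrefl
          · rw [Set.mem_singleton_iff] at hy; subst hy; exact Or.inr rfl
        · rw [Set.mem_singleton_iff] at hx; subst hx
          rcases hy with rfl | rfl | hy
          · exact absurd hxy.symm (hstep1 _ hb₀)
          · exact Or.inr hsb
          · rw [Set.mem_singleton_iff] at hy; subst hy; exact absurd hxy G.irrefl
    exact hpath1 hA1card hB₁card hIP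
  · -- |X₁| ≥ 4
    set Y₁ : Set V := X₁ \ {a₀} with hY₁def
    set Y₂ : Set V := insert a₀ X₂ with hY₂def
    set C₁ : Set V := {x | x ∈ X₁ ∧ G.Adj a₀ x} with hC₁def
    have hY₁X₁ : Y₁ ⊆ X₁ := Set.diff_subset
    have hY₁card : 3 ≤ Y₁.ncard := by
      rw [hY₁def, Set.ncard_diff_singleton_of_mem haX₁]; omega
    have hY₂card : 3 ≤ Y₂.ncard := by
      rw [hY₂def, Set.ncard_insert_of_notMem haX₂ (Set.toFinite _)]; omega
    have hC₁w : w ∈ C₁ := ⟨hwX₁, haw⟩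
    have hB₁Y₁ : B₁ ⊆ Y₁ :=
      fun x hx => ⟨h10 hx, fun hc => haB₁ ((Set.mem_singleton_iff.1 hc) ▸ hx)⟩
    have hC₁Y₁ : C₁ ⊆ Y₁ :=
      fun x hx => ⟨hx.1, fun hc => G.irrefl ((Set.mem_singleton_iff.1 hc) ▸ hx.2)⟩
    have haY₁ : a₀ ∉ Y₁ := fun hc => hc.2 rfl
    have hins : insert a₀ Y₁ = X₁ := by
      rw [hY₁def, Set.insert_diff_singleton, Set.insert_eq_self.2 haX₁]
    have hexcl1 : C₁.ncard = 1 → B₁.ncard = 1 → ¬ InducesPath G Y₁ := by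
      intro hC₁card hB₁card hip
      obtain ⟨c, hC₁eq⟩ := Set.ncard_eq_one.mp hC₁card
      obtain ⟨b, hB₁eq⟩ := Set.ncard_eq_one.mp hB₁card
      have hcC₁ : c ∈ C₁ := hC₁eq ▸ rfl
      have hbB₁ : b ∈ B₁ := hB₁eq ▸ rfl
      obtain ⟨u, v, p, huv, hp, hsupp, hind, ⟨wu, hwuY, hwuadj, hwu⟩,
        ⟨wv, hwvY, hwvadj, hwv⟩⟩ := induced_path_endpoints hip hY₁card
      have honly : ∀ e : V, c = e → ∀ x ∈ Y₁, G.Adj a₀ x → x = e := by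
        intro e hce x hx hax
        have hxc : x ∈ C₁ := ⟨hx.1, hax⟩
        rw [hC₁eq, Set.mem_singleton_iff] at hxc
        exact hce ▸ hxc
      by_cases hcu : c = u
      · exact hpath1 hA1card hB₁card
          (hins ▸ extend_induced p hp hsupp hind haY₁ (hcu ▸ hcC₁.2) (honly u hcu))
      · by_cases hcv : c = v
        · have hsupp' : ∀ x, x ∈ p.reverse.support ↔ x ∈ Y₁ :=
            fun x => (rev_supp p x).trans (hsupp x)
          have hind' : ∀ x ∈ Y₁, ∀ y ∈ Y₁, G.Adj x y → s(x, y) ∈ p.reverse.edges :=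
            fun x hx y hy hxy => (rev_edges p _).2 (hind x hx y hy hxy)
          exact hpath1 hA1card hB₁card
            (hins ▸ extend_induced p.reverse hp.reverse hsupp' hind' haY₁ (hcv ▸ hcC₁.2)
              (honly v hcv))
        · have key : ∀ e we : V, e ∈ Y₁ → we ∈ Y₁ → e ≠ b → e ≠ c → G.Adj e we →
              (∀ x ∈ Y₁, G.Adj e x → x = we) → False := by
            intro e we heY hweY heb hec headj huniq
            have hNall : ∀ y, G.Adj e y → y ∈ ({we} : Set V) := by
              intro y hy
              rw [Set.mem_singleton_iff]
              rcases (h2 ▸ Set.mem_univ y : y ∈ X₁ ∪ X₂) with hy1 | hy2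
              · by_cases hya : y = a₀
                · exfalso
                  have hec2 : e ∈ C₁ := ⟨heY.1, (hya ▸ hy).symm⟩
                  rw [hC₁eq, Set.mem_singleton_iff] at hec2
                  exact hec hec2
                · exact huniq y ⟨hy1, fun hc2 => hya (Set.mem_singleton_iff.1 hc2)⟩ hy
              · exfalso
                rcases h17 e heY.1 y hy2 hy with ⟨heA, -⟩ | ⟨heB, -⟩
                · rw [hA1, Set.mem_singleton_iff] at heA
                  exact heY.2 (Set.mem_singleton_iff.2 heA)
                · rw [hB₁eq, Set.mem_singleton_iff] at heB
                  exact heb heB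
            obtain ⟨a₂, ha₂⟩ := h7
            refine hStar (starcut_isolate G {we} we e rfl ?_ ?_ hNall ⟨a₂, Set.mem_univ _, ?_⟩)
            · intro y hy hne
              exact absurd (Set.mem_singleton_iff.1 hy) hne
            · exact fun hc2 => headj.ne (Set.mem_singleton_iff.1 hc2)
            · rintro (rfl | hc2)
              · exact h1.ne_of_mem (hY₁X₁ heY) (h11 ha₂) rfl
              · rw [Set.mem_singleton_iff] at hc2
                exact h1.ne_of_mem (hY₁X₁ hweY) (h11 ha₂) hc2.symm
          by_cases hbu : b = u
          · refine key v wv ((hsupp v).1 p.end_mem_support) hwvY ?_ (fun h => hcv h.symm)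
              hwvadj hwv
            exact fun h => huv (by rw [← hbu, ← h])
          · exact key u wu ((hsupp u).1 p.start_mem_support) hwuY (fun h => hbu h.symm)
              (fun h => hcu h.symm) hwuadj hwu
    have hexcl2 : ({a₀} : Set V).ncard = 1 → B₂.ncard = 1 → ¬ InducesPath G Y₂ := by
      intro _ hB₂card hip
      obtain ⟨b₂, hB₂eq⟩ := Set.ncard_eq_one.mp hB₂card
      obtain ⟨u, v, p, huv, hp, hsupp, hind, ⟨wu, hwuY, hwuadj, hwu⟩,
        ⟨wv, hwvY, hwvadj, hwv⟩⟩ := induced_path_endpoints hip hY₂card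
      have tailcase : ∀ (v' : V) (p' : G.Walk a₀ v'), p'.IsPath → a₀ ≠ v' →
          (∀ x, x ∈ p'.support ↔ x ∈ Y₂) →
          (∀ x ∈ Y₂, ∀ y ∈ Y₂, G.Adj x y → s(x, y) ∈ p'.edges) → False := by
        intro v' p' hp' hnev hsupp' hind'
        obtain ⟨w2, q, hadj2, hqpath, hq_supp, haq, hedges⟩ := walk_first_step p' hp' hnev
        have hw2Y₂ : w2 ∈ Y₂ := (hsupp' w2).1 ((hq_supp w2).2 (Or.inr q.start_mem_support))
        have hw2X₂ : w2 ∈ X₂ := by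
          rcases hw2Y₂ with h | h
          · exact absurd (h ▸ hadj2) G.irrefl
          · exact h
        have hA₂eq : A₂ = {w2} := by
          ext x
          rw [Set.mem_singleton_iff]
          constructor
          · intro hx
            have hxY₂ : x ∈ Y₂ := Set.mem_insert_of_mem _ (h11 hx)
            have hE : s(a₀, x) ∈ p'.edges :=
              hind' a₀ (Set.mem_insert _ _) x hxY₂ (h15 a₀ haA₁ x hx)
            exact path_start_nbr_unique p' hp' hE ((hedges _).2 (Or.inl rfl))
          · rintro rfl
            rcases h17 a₀ haX₁ x hw2X₂ hadj2 with ⟨-, hxA⟩ | ⟨haB, -⟩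
            · exact hxA
            · exact absurd haB haB₁
        refine hpath2 (by rw [hA₂eq]; exact Set.ncard_singleton _) hB₂card
          ⟨w2, v', q, hqpath, ?_, ?_⟩
        · intro x
          constructor
          · intro hx
            have hxY : x ∈ Y₂ := (hsupp' x).1 ((hq_supp x).2 (Or.inr hx))
            rcases hxY with h | h
            · exact absurd (h ▸ hx) haq
            · exact h
          · intro hx
            have hxp : x ∈ p'.support := (hsupp' x).2 (Set.mem_insert_of_mem _ hx)
            rcases (hq_supp x).1 hxp with rfl | h
            · exact absurd hx haX₂
            · exact h
        · intro x hx y hy hxy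
          have hE := hind' x (Set.mem_insert_of_mem _ hx) y (Set.mem_insert_of_mem _ hy) hxy
          rcases (hedges _).1 hE with heq2 | hmem
          · exfalso
            rw [Sym2.eq_iff] at heq2
            rcases heq2 with ⟨hxa, -⟩ | ⟨-, hya⟩
            · exact haX₂ (hxa ▸ hx)
            · exact haX₂ (hya ▸ hy)
          · exact hmem
      by_cases hau : a₀ = u
      · subst hau
        exact tailcase v p hp huv hsupp hind
      · by_cases hav : a₀ = v
        · subst hav
          refine tailcase u p.reverse hp.reverse (fun h => hau h) ?_ ?_
          · exact fun x => (rev_supp p x).trans (hsupp x)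
          · exact fun x hx y hy hxy => (rev_edges p _).2 (hind x hx y hy hxy)
        · have key2 : ∀ e we : V, e ∈ Y₂ → e ≠ a₀ → e ≠ b₂ → G.Adj e we →
              (∀ x ∈ Y₂, G.Adj e x → x = we) → False := by
            intro e we heY hea heb headj huniq
            have heX₂ : e ∈ X₂ := by
              rcases heY with h | h
              · exact absurd h hea
              · exact h
            have hNall : ∀ y, G.Adj e y → y ∈ ({we} : Set V) := by
              intro y hy
              rw [Set.mem_singleton_iff]
              rcases (h2 ▸ Set.mem_univ y : y ∈ X₁ ∪ X₂) with hy1 | hy2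
              · by_cases hya : y = a₀
                · exact huniq y (by rw [hya]; exact Set.mem_insert _ _) hy
                · exfalso
                  rcases h17 y hy1 e heX₂ hy.symm with ⟨hyA, -⟩ | ⟨-, heB⟩
                  · rw [hA1, Set.mem_singleton_iff] at hyA
                    exact hya hyA
                  · rw [hB₂eq, Set.mem_singleton_iff] at heB
                    exact heb heB
              · exact huniq y (Set.mem_insert_of_mem _ hy2) hy
            obtain ⟨z, hzX₁, hz2⟩ := three_diff_pair X₁ e we h3
            refine hStar (starcut_isolate G {we} we e rfl ?_ ?_ hNall ⟨z, Set.mem_univ _, ?_⟩)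
            · intro y hy hne
              exact absurd (Set.mem_singleton_iff.1 hy) hne
            · exact fun hc2 => headj.ne (Set.mem_singleton_iff.1 hc2)
            · rintro (rfl | hc2)
              · exact hz2 (Or.inl rfl)
              · exact hz2 (Or.inr hc2)
          by_cases hub : u = b₂
          · refine key2 v wv ((hsupp v).1 p.end_mem_support) (fun h => hav h.symm)
              (fun h => huv (by rw [hub, ← h])) hwvadj hwv
          · exact key2 u wu ((hsupp u).1 p.start_mem_support) (fun h => hau h.symm)
              hub hwuadj hwu
    have hTJnew : TwoJoinSplit G Y₁ Y₂ C₁ {a₀} B₁ B₂ := by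
      refine ⟨⟨?_, ?_, hY₁card, hY₂card, ⟨w, hC₁w⟩, h6, ⟨a₀, rfl⟩, h8, hC₁Y₁, hB₁Y₁,
        Set.singleton_subset_iff.2 (Set.mem_insert a₀ X₂),
        h12.trans (Set.subset_insert a₀ X₂), ?_, ?_, ?_, h16, ?_⟩, ?_, ?_, hexcl1, hexcl2⟩
      · refine Set.disjoint_left.2 ?_
        rintro x hx (rfl | hx2)
        · exact hx.2 rfl
        · exact h1.ne_of_mem hx.1 hx2 rfl
      · ext z
        simp only [Set.mem_union, Set.mem_univ, iff_true]
        have hz : z ∈ X₁ ∪ X₂ := h2 ▸ Set.mem_univ z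
        rcases hz with hz | hz
        · by_cases hza : z = a₀
          · exact Or.inr (Or.inl hza)
          · exact Or.inl ⟨hz, fun hc => hza (Set.mem_singleton_iff.1 hc)⟩
        · exact Or.inr (Or.inr hz)
      · exact Set.disjoint_left.2 (fun x hx hx2 => hstep1 x hx2 hx.2)
      · exact Set.disjoint_singleton_left.2 (fun hc => haX₂ (h12 hc))
      · intro x hx y hy
        rw [Set.mem_singleton_iff] at hy; subst hy
        exact hx.2.symm
      · intro x hx y hy hxy
        rcases hy with rfl | hy2
        · exact Or.inl ⟨⟨hx.1, hxy.symm⟩, rfl⟩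
        · rcases h17 x hx.1 y hy2 hxy with ⟨hA, -⟩ | hB
          · rw [hA1, Set.mem_singleton_iff] at hA
            exact absurd hA (fun hc => hx.2 (Set.mem_singleton_iff.2 hc))
          · exact Or.inr hB
      · refine ⟨w, hC₁w, b₀, hb₀, q', fun x hx => ⟨hq'X₁ x hx, ?_⟩⟩
        exact fun hc => haq' ((Set.mem_singleton_iff.1 hc) ▸ hx)
      · obtain ⟨a₂, ha₂, b₂, hb₂, r₂, hr₂⟩ := hr2
        refine ⟨a₀, rfl, b₂, hb₂, Walk.cons (h15 a₀ haA₁ a₂ ha₂) r₂, ?_⟩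
        intro x hx
        rw [Walk.support_cons, List.mem_cons] at hx
        rcases hx with rfl | hx
        · exact Set.mem_insert _ _
        · exact Set.mem_insert_of_mem _ (hr₂ x hx)
    have hss : Y₁ ⊂ X₁ := ⟨hY₁X₁, fun hsub => (hsub haX₁).2 rfl⟩
    exact (hminside Y₁ Y₂ C₁ {a₀} B₁ B₂ hTJnew).1 hss

end Helpers

/-- Let G be a graph with no star cutset and let (X₁, X₂, A₁, A₂, B₁, B₂) be a split
of a minimally-sided 2-join of G with minimal side X₁. Then |A₁| ≥ 2 and |B₁| ≥ 2,
and every vertex of A₂ ∪ B₂ has degree at least 3 in G. -/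
theorem stmt6 {V : Type u} [Fintype V] (G : SimpleGraph V)
    (hStar : ¬ HasStarCutset G)
    (X₁ X₂ A₁ A₂ B₁ B₂ : Set V)
    (hmin : MinimallySidedTwoJoin G X₁ X₂ A₁ A₂ B₁ B₂) :
    2 ≤ A₁.ncard ∧ 2 ≤ B₁.ncard ∧
      ∀ v ∈ A₂ ∪ B₂, 3 ≤ (G.neighborSet v).ncard := by
  have hA := A1_two hStar hmin
  have hminB := minsided_swapAB hmin
  have hB := A1_two hStar hminB
  refine ⟨hA, hB, ?_⟩
  intro v hv
  rcases hv with hv | hv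
  · exact deg_ge_three hStar hmin.1 hA v hv
  · exact deg_ge_three hStar hminB.1 hB v hv
end

section
/- Let G be a graph having a clique cutset decomposition tree of depth p ≥ 1 with splits (A_i, K_i, B_i) for 0 ≤ i ≤ p−1, and set B_p = A_{p−1}, K_p = K_{p−1}. Let X be one of the sets A_i ∪ K_i or K_i ∪ B_i for some 0 ≤ i ≤ p−1, or the set K_p ∪ B_p. Then for every connected component C of G − X, the neighborhood N_G(C) is contained in X and is a clique of G. -/
open SimpleGraph

universe u

variable {V : Type u}

/-- A chain of adjacent vertices, all of which (except possibly the start) avoid `S`. -/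
def ChainOut (G : SimpleGraph V) (S : Set V) : V → V → Prop :=
  Relation.ReflTransGen (fun a b => b ∉ S ∧ G.Adj a b)

/-- `y` and `z` are joined by a walk of length ≥ 2 all of whose interior avoids `S`. -/
def LinkedOut (G : SimpleGraph V) (S : Set V) (y z : V) : Prop :=
  ∃ c c', G.Adj y c ∧ c ∉ S ∧ ChainOut G S c c' ∧ G.Adj c' z

/-- `S` separates like a node of a clique cutset tree. -/
def SepProp (G : SimpleGraph V) (S : Set V) : Prop :=
  ∀ y ∈ S, ∀ z ∈ S, y ≠ z → LinkedOut G S y z → G.Adj y z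

lemma sepProp_univ (G : SimpleGraph V) : SepProp G Set.univ := by
  rintro y - z - - ⟨c, c', -, hc, -, -⟩
  exact absurd (Set.mem_univ c) hc

lemma linkedOut_extend {G : SimpleGraph V} {S : Set V} {y c d : V}
    (h : G.Adj y c ∨ LinkedOut G S y c) (hcS : c ∉ S) (hcd : G.Adj c d) :
    LinkedOut G S y d := by
  rcases h with h | ⟨c₀, c₁, h₀, h₁, h₂, h₃⟩
  · exact ⟨c, c, h, hcS, Relation.ReflTransGen.refl, hcd⟩
  · exact ⟨c₀, c, h₀, h₁, h₂.tail ⟨hcS, h₃⟩, hcd⟩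

lemma sep_step (G : SimpleGraph V) (S X K' O : Set V)
    (hsep : SepProp G S) (hXS : X ⊆ S) (hOS : O ⊆ S) (hOX : ∀ v ∈ O, v ∉ X)
    (hSO : ∀ v ∈ S, v ∉ X → v ∈ O) (hK : K' ⊆ X) (hKcl : G.IsClique K')
    (hns : ∀ u ∈ X, u ∉ K' → ∀ v ∈ O, ¬ G.Adj u v) : SepProp G X := by
  intro y hy z hz hyz hlo
  obtain ⟨c, c', hyc, hcX, hchain, hc'z⟩ := hlo
  -- any vertex of X adjacent to a vertex of O lies in K'
  have hzK : ∀ w ∈ X, ∀ o ∈ O, G.Adj w o → w ∈ K' := by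
    intro w hw o ho hadj
    by_contra hk
    exact hns w hw hk o ho hadj
  -- a vertex of S linked to another vertex of S is adjacent or equal
  have F1 : ∀ {u v : V}, u ∈ S → v ∈ S →
      (G.Adj u v ∨ LinkedOut G S u v) → u = v ∨ G.Adj u v := by
    intro u v hu hv h
    by_cases e : u = v
    · exact Or.inl e
    · rcases h with h | h
      · exact Or.inr h
      · exact Or.inr (hsep u hu v hv e h)
  have key : ∀ c, ChainOut G X c c' → c ∉ X →
      ∀ y ∈ S, (G.Adj y c ∨ LinkedOut G S y c) →
        (y ∈ X → z = y ∨ G.Adj y z) ∧ (y ∈ O → z ∈ K') := by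
    intro c h
    induction h using Relation.ReflTransGen.head_induction_on with
    | refl =>
      intro hcX' u hu hQ
      by_cases hcS : c' ∈ S
      · have hcO : c' ∈ O := hSO c' hcS hcX'
        have hzK' : z ∈ K' := hzK z hz c' hcO hc'z.symm
        refine ⟨?_, fun _ => hzK'⟩
        intro huX
        have huc : u ≠ c' := fun e => hcX' (e ▸ huX)
        rcases F1 hu hcS hQ with e | hadj
        · exact absurd e huc
        · have huK : u ∈ K' := hzK u huX c' hcO hadj
          by_cases e : z = u
          · exact Or.inl e
          · exact Or.inr ((hKcl huK hzK' (fun e' => e e'.symm)))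
      · have main : u = z ∨ G.Adj u z := by
          by_cases e : u = z
          · exact Or.inl e
          · refine Or.inr (hsep u hu z (hXS hz) e ?_)
            exact linkedOut_extend hQ hcS hc'z
        constructor
        · intro _
          rcases main with e | h
          · exact Or.inl e.symm
          · exact Or.inr h
        · intro huO
          rcases main with e | h
          · exact absurd hz (e ▸ hOX u huO)
          · exact hzK z hz u huO h.symm
    | @head a c hr hchain ih =>
      intro haX u hu hQ
      by_cases haS : a ∈ S
      · have haO : a ∈ O := hSO a haS haX
        have hzK' : z ∈ K' := (ih hr.1 a haS (Or.inl hr.2)).2 haO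
        refine ⟨?_, fun _ => hzK'⟩
        intro huX
        have hua : u ≠ a := fun e => haX (e ▸ huX)
        rcases F1 hu haS hQ with e | hadj
        · exact absurd e hua
        · have huK : u ∈ K' := hzK u huX a haO hadj
          by_cases e : z = u
          · exact Or.inl e
          · exact Or.inr ((hKcl huK hzK' (fun e' => e e'.symm)))
      · exact ih hr.1 u hu (Or.inr (linkedOut_extend hQ haS hr.2))
  rcases (key c hchain hcX y (hXS hy) (Or.inl hyc)).1 hy with e | h
  · exact absurd e.symm hyz
  · exact h

lemma walk_chainOut {G : SimpleGraph V} {X : Set V} :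
    ∀ {a b : V} (w : G.Walk a b), (∀ v ∈ w.support, v ∉ X) → ChainOut G X a b := by
  intro a b w
  induction w with
  | nil => intro _; exact Relation.ReflTransGen.refl
  | @cons u v b h w ih =>
    intro hs
    refine Relation.ReflTransGen.head ⟨?_, h⟩ (ih ?_)
    · exact hs v (by simp [SimpleGraph.Walk.support_cons, SimpleGraph.Walk.start_mem_support])
    · intro x hx
      exact hs x (by simp [SimpleGraph.Walk.support_cons, hx])

/-- Let G be a graph having a clique cutset decomposition tree of depth p ≥ 1 with
splits (Aᵢ, Kᵢ, Bᵢ) for 0 ≤ i ≤ p−1, and set B_p = A_{p−1}, K_p = K_{p−1}. Let X be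
one of the sets Aᵢ ∪ Kᵢ or Kᵢ ∪ Bᵢ for some 0 ≤ i ≤ p−1, or the set K_p ∪ B_p. Then
for every connected component C of G − X, the neighborhood N_G(C) is contained in X
and is a clique of G. -/
theorem stmt8 {V : Type u} [Fintype V] (G : SimpleGraph V)
    (p : ℕ) (hp : 1 ≤ p) (A K B Vs : ℕ → Set V)
    (hV0 : Vs 0 = Set.univ)
    (hVsucc : ∀ i < p, Vs (i + 1) = A i ∪ K i)
    (hsplit : ∀ i < p, (A i).Nonempty ∧ (B i).Nonempty ∧
      Disjoint (A i) (K i) ∧ Disjoint (A i) (B i) ∧ Disjoint (K i) (B i) ∧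
      A i ∪ K i ∪ B i = Vs i ∧ G.IsClique (K i) ∧
      ∀ a ∈ A i, ∀ b ∈ B i, ¬ G.Adj a b)
    (hleaf : ∀ i < p, ¬ HasCliqueCutsetOn G (K i ∪ B i))
    (hlast : ¬ HasCliqueCutsetOn G (Vs p))
    (X : Set V)
    (hX : (∃ i < p, X = A i ∪ K i ∨ X = K i ∪ B i) ∨ X = K (p - 1) ∪ A (p - 1))
    (C : Set V) (hC : IsCompOf G Xᶜ C) :
    {y : V | y ∉ C ∧ ∃ x ∈ C, G.Adj x y} ⊆ X ∧
      G.IsClique {y : V | y ∉ C ∧ ∃ x ∈ C, G.Adj x y} := by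
  obtain ⟨hCne, hCsub, hCconn, hCcl⟩ := hC
  -- The separation property holds for every level set `Vs i`, `i ≤ p`.
  have hSep : ∀ i ≤ p, SepProp G (Vs i) := by
    intro i
    induction i with
    | zero => intro _; rw [hV0]; exact sepProp_univ G
    | succ n ih =>
      intro hnp
      have hn : n < p := hnp
      obtain ⟨-, -, hAK, hAB, hKB, hunion, hKcl, hadjAB⟩ := hsplit n hn
      rw [hVsucc n hn]
      refine sep_step G (Vs n) (A n ∪ K n) (K n) (B n) (ih (le_of_lt hn)) ?_ ?_ ?_ ?_ ?_ hKcl ?_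
      · rw [← hunion]; exact Set.subset_union_left
      · rw [← hunion]; exact Set.subset_union_right
      · intro v hv
        rintro (h | h)
        · exact (hAB.ne_of_mem h hv) rfl
        · exact (hKB.ne_of_mem h hv) rfl
      · intro v hv hvX
        rw [← hunion] at hv
        rcases hv with h | h
        · exact absurd h hvX
        · exact h
      · exact Set.subset_union_right
      · rintro u (hu | hu) huK v hv
        · exact hadjAB u hu v hv
        · exact absurd hu huK
  -- The separation property for the chosen X.
  have hSepX : SepProp G X := by
    rcases hX with ⟨i, hip, hXeq | hXeq⟩ | hXeq
    · rw [hXeq, ← hVsucc i hip]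
      exact hSep (i + 1) hip
    · obtain ⟨-, -, hAK, hAB, hKB, hunion, hKcl, hadjAB⟩ := hsplit i hip
      rw [hXeq]
      refine sep_step G (Vs i) (K i ∪ B i) (K i) (A i) (hSep i (le_of_lt hip)) ?_ ?_ ?_ ?_ ?_
        hKcl ?_
      · rw [← hunion]
        rintro v (h | h)
        · exact Or.inl (Or.inr h)
        · exact Or.inr h
      · rw [← hunion]
        intro v h
        exact Or.inl (Or.inl h)
      · intro v hv
        rintro (h | h)
        · exact (hAK.ne_of_mem hv h) rfl
        · exact (hAB.ne_of_mem hv h) rfl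
      · intro v hv hvX
        rw [← hunion] at hv
        rcases hv with (h | h) | h
        · exact h
        · exact absurd (Or.inl h) hvX
        · exact absurd (Or.inr h) hvX
      · exact Set.subset_union_left
      · rintro u (hu | hu) huK v hv
        · exact absurd hu huK
        · intro hadj
          exact hadjAB v hv u hu hadj.symm
    · have hp1 : p - 1 < p := Nat.sub_lt hp one_pos
      have hp2 : p - 1 + 1 = p := Nat.succ_pred_eq_of_pos hp
      rw [hXeq, Set.union_comm, ← hVsucc (p - 1) hp1, hp2]
      exact hSep p le_rfl
  have hsub : {y : V | y ∉ C ∧ ∃ x ∈ C, G.Adj x y} ⊆ X := by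
    rintro y ⟨hyC, x, hxC, hxy⟩
    by_contra hyX
    exact hyC (hCcl x hxC y hyX hxy)
  refine ⟨hsub, ?_⟩
  rintro y hy z hz hyz
  obtain ⟨hyC, x, hxC, hxy⟩ := hy
  obtain ⟨hzC, x', hx'C, hx'z⟩ := hz
  obtain ⟨w, hw⟩ := hCconn x hxC x' hx'C
  exact hSepX y (hsub ⟨hyC, x, hxC, hxy⟩) z (hsub ⟨hzC, x', hx'C, hx'z⟩) hyz
    ⟨x, x', hxy.symm, hCsub hxC, walk_chainOut w (fun v hv => hw v hv), hx'z⟩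
end

section
/- Let R be a triangle-free graph and let F be a nonempty finite set of edges of R. Then the subgraph of the line graph L(R) induced by F is a chordless path if and only if F is the edge set of a path in R. -/
open SimpleGraph

universe u

variable {V : Type u}

section lineAux
variable {V : Type u} {R : SimpleGraph V}

lemma exists_other' {e : Sym2 V} (he : e ∈ R.edgeSet) {v : V} (hv : v ∈ e) :
    ∃ u : V, R.Adj v u ∧ e = s(v, u) := by
  induction e using Sym2.ind with
  | _ x y =>
    rw [Sym2.mem_iff] at hv
    rcases hv with rfl | rfl
    · exact ⟨y, he, rfl⟩
    · exact ⟨x, (R.mem_edgeSet.mp he).symm, Sym2.eq_swap⟩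

lemma mem_support_of_mem_edges'' {x y v : V} {q : R.Walk x y} {e : Sym2 V}
    (he : e ∈ q.edges) (hv : v ∈ e) : v ∈ q.support := by
  induction e using Sym2.ind with
  | _ a b =>
    rw [Sym2.mem_iff] at hv
    rcases hv with rfl | rfl
    · exact q.fst_mem_support_of_mem_edges he
    · exact q.snd_mem_support_of_mem_edges he

lemma exists_edge_of_mem_support' {x y v : V} (q : R.Walk x y) (hq : q.edges ≠ [])
    (hv : v ∈ q.support) : ∃ e ∈ q.edges, v ∈ e := by
  induction q with
  | nil => simp at hq
  | @cons x x' y h q' ih =>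
    rw [Walk.support_cons, List.mem_cons] at hv
    rcases hv with rfl | hv
    · exact ⟨s(v, x'), by simp, by simp⟩
    · cases q' with
      | nil =>
        rw [Walk.support_nil, List.mem_singleton] at hv
        subst hv
        exact ⟨s(x, v), by simp, by simp⟩
      | cons h2 q'' =>
        obtain ⟨e, he, hve⟩ := ih (by simp) hv
        exact ⟨e, by rw [Walk.edges_cons]; exact List.mem_cons_of_mem _ he, hve⟩

lemma edge_eq_of_start_mem' {x x' y : V} {h : R.Adj x x'} {q : R.Walk x' y}
    (hq : (Walk.cons h q).IsPath) {e : Sym2 V}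
    (he : e ∈ (Walk.cons h q).edges) (hx : x ∈ e) : e = s(x, x') := by
  rw [Walk.edges_cons, List.mem_cons] at he
  rcases he with rfl | he
  · rfl
  · exact absurd (mem_support_of_mem_edges'' he hx) ((Walk.cons_isPath_iff h q).mp hq).2

lemma line_of_path' : ∀ {x y : V} (q : R.Walk x y), q.IsPath → 1 ≤ q.length →
    ∃ (a b : R.edgeSet) (p : R.lineGraph.Walk a b), p.IsPath ∧
      p.support.map Subtype.val = q.edges ∧
      ∀ g ∈ p.support, ∀ h ∈ p.support, R.lineGraph.Adj g h → s(g, h) ∈ p.edges := by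
  intro x y q
  induction q with
  | nil => intro _ hl; simp at hl
  | @cons x x' y h q' ih =>
    intro hq _
    cases q' with
    | nil =>
      refine ⟨⟨s(x, x'), h⟩, ⟨s(x, x'), h⟩, Walk.nil, Walk.IsPath.nil, by simp, ?_⟩
      intro g hg h' hh' hadj
      rw [Walk.support_nil, List.mem_singleton] at hg hh'
      subst hg; subst hh'
      exact absurd hadj (R.lineGraph.irrefl)
    | @cons x' x'' y h2 q'' =>
      have hq' : (Walk.cons h2 q'').IsPath := hq.of_cons
      have hxns : x ∉ (Walk.cons h2 q'').support := ((Walk.cons_isPath_iff _ _).mp hq).2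
      obtain ⟨a, b, p, hp, hmap, hch⟩ := ih hq' (by simp)
      have hsup := p.support_eq_cons
      have hav : (a : Sym2 V) = s(x', x'') := by
        rw [hsup, List.map_cons, Walk.edges_cons] at hmap
        exact (List.cons_eq_cons.mp hmap).1
      have K : ∀ g : R.edgeSet, g ∈ p.support → x ∈ (g : Sym2 V) → False := by
        intro g hg hxg
        have hmem : (g : Sym2 V) ∈ (Walk.cons h2 q'').edges := by
          rw [← hmap]
          rw [hsup] at hg ⊢
          exact List.mem_map_of_mem hg
        exact hxns (mem_support_of_mem_edges'' hmem hxg)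
      set e0 : R.edgeSet := ⟨s(x, x'), h⟩ with he0def
      have hxe0 : x ∈ (e0 : Sym2 V) := by simp [he0def]
      have hamem : a ∈ p.support := by rw [hsup]; exact List.mem_cons_self
      have hne : e0 ≠ a := fun hh => K a hamem (hh ▸ hxe0)
      have hadj0 : R.lineGraph.Adj e0 a := by
        rw [lineGraph_adj_iff_exists]
        exact ⟨hne, x', by simp [he0def], by rw [hav]; simp⟩
      have he0ns : e0 ∉ p.support := fun hmem => K e0 hmem hxe0
      refine ⟨e0, b, Walk.cons hadj0 p, hp.cons he0ns, ?_, ?_⟩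
      · rw [Walk.support_cons, List.map_cons, hmap, Walk.edges_cons, Walk.edges_cons]
        rfl
      · intro g hg h' hh' hadj2
        rw [Walk.support_cons, List.mem_cons] at hg hh'
        rw [Walk.edges_cons, List.mem_cons]
        obtain ⟨hne2, v, hv1, hv2⟩ := lineGraph_adj_iff_exists.mp hadj2
        rcases hg with rfl | hg
        · rcases hh' with rfl | hh'
          · exact absurd rfl hne2
          · -- g = e0, h' ∈ p.support
            have hv1' : v = x ∨ v = x' := by
              rw [he0def] at hv1; simpa using hv1
            rcases hv1' with rfl | rfl
            · exact absurd hv2 (fun hc => K h' hh' hc)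
            · have hh'edge : (h' : Sym2 V) ∈ (Walk.cons h2 q'').edges := by
                rw [← hmap]; exact List.mem_map_of_mem hh'
              have hha : h' = a :=
                Subtype.ext (by rw [edge_eq_of_start_mem' hq' hh'edge hv2, hav])
              subst hha
              exact Or.inl rfl
        · rcases hh' with rfl | hh'
          · -- h' = e0, g ∈ p.support
            have hv2' : v = x ∨ v = x' := by
              rw [he0def] at hv2; simpa using hv2
            rcases hv2' with rfl | rfl
            · exact absurd hv1 (fun hc => K g hg hc)
            · have hgedge : (g : Sym2 V) ∈ (Walk.cons h2 q'').edges := by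
                rw [← hmap]; exact List.mem_map_of_mem hg
              have hha : g = a :=
                Subtype.ext (by rw [edge_eq_of_start_mem' hq' hgedge hv1, hav])
              subst hha
              rw [Sym2.eq_swap]
              exact Or.inl rfl
          · exact Or.inr (hch g hg h' hh' hadj2)
lemma path_of_line' : ∀ {a b : R.edgeSet} (p : R.lineGraph.Walk a b), p.IsPath →
    (∀ g ∈ p.support, ∀ h ∈ p.support, R.lineGraph.Adj g h → s(g, h) ∈ p.edges) →
    ∃ (x y : V) (q : R.Walk x y), q.IsPath ∧ q.edges = p.support.map Subtype.val ∧
      ∀ g ∈ p.support, x ∈ (g : Sym2 V) → g = a := by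
  intro a b p
  induction p with
  | nil =>
    rename_i a
    obtain ⟨e, he⟩ := a
    revert he
    induction e using Sym2.ind with
    | _ u v =>
      intro he _ _
      have hadj : R.Adj u v := R.mem_edgeSet.mp he
      refine ⟨u, v, Walk.cons hadj Walk.nil, ?_, by simp, ?_⟩
      · rw [Walk.cons_isPath_iff]
        exact ⟨Walk.IsPath.nil, by simp [hadj.ne]⟩
      · intro g hg _
        rw [Walk.support_nil, List.mem_singleton] at hg
        exact hg
  | @cons a a' b hadj p' ih =>
    intro hp hch
    obtain ⟨hne, v, hva, hva'⟩ := lineGraph_adj_iff_exists.mp hadj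
    obtain ⟨u, hvu, hau⟩ := exists_other' a.2 hva
    cases p' with
    | nil =>
      obtain ⟨w, hvw, ha'w⟩ := exists_other' a'.2 hva'
      have huw : u ≠ w := fun hh => hne (Subtype.ext (by rw [hau, ha'w, hh]))
      refine ⟨u, w, Walk.cons hvu.symm (Walk.cons hvw Walk.nil), ?_, ?_, ?_⟩
      · rw [Walk.cons_isPath_iff, Walk.cons_isPath_iff]
        refine ⟨⟨Walk.IsPath.nil, by simp [hvw.ne]⟩, ?_⟩
        simp [hvu.ne', huw]
      · simp [hau, ha'w, Sym2.eq_swap]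
      · intro g hg hug
        simp only [Walk.support_cons, Walk.support_nil, List.mem_cons,
          List.mem_singleton] at hg
        rcases hg with rfl | rfl | h
        · rfl
        · exfalso
          rw [ha'w, Sym2.mem_iff] at hug
          rcases hug with rfl | rfl
          · exact hvu.ne' rfl
          · exact huw rfl
        · exact absurd h (by simp)
    | @cons a' a'' b hadj2 p'' =>
      have hp' : (Walk.cons hadj2 p'').IsPath := hp.of_cons
      have hans : a ∉ (Walk.cons hadj2 p'').support := ((Walk.cons_isPath_iff _ _).mp hp).2
      have hch' : ∀ g ∈ (Walk.cons hadj2 p'').support, ∀ h ∈ (Walk.cons hadj2 p'').support,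
          R.lineGraph.Adj g h → s(g, h) ∈ (Walk.cons hadj2 p'').edges := by
        intro g hg h' hh' hgh
        have hres := hch g (by rw [Walk.support_cons]; exact List.mem_cons_of_mem _ hg)
          h' (by rw [Walk.support_cons]; exact List.mem_cons_of_mem _ hh') hgh
        rw [Walk.edges_cons, List.mem_cons] at hres
        rcases hres with heq | hmem
        · exfalso
          rcases Sym2.eq_iff.mp heq with ⟨rfl, rfl⟩ | ⟨rfl, rfl⟩
          · exact hans hg
          · exact hans hh'
        · exact hmem
      obtain ⟨x', y, q', hq', hE, hexcl⟩ := ih hp' hch'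
      cases q' with
      | nil => rw [Walk.support_cons, List.map_cons] at hE; simp at hE
      | @cons x' z y h1 q''' =>
        have hE' := hE
        rw [Walk.edges_cons, Walk.support_cons, List.map_cons] at hE'
        have hE1 : s(x', z) = (a' : Sym2 V) := (List.cons_eq_cons.mp hE').1
        have hE2 : q'''.edges = List.map Subtype.val p''.support :=
          (List.cons_eq_cons.mp hE').2
        have hvx : v = x' := by
          by_contra hvne
          have hvz : v = z := by
            rw [← hE1, Sym2.mem_iff] at hva'
            tauto
          subst hvz
          have hz2 : v ∈ (a'' : Sym2 V) := by
            rw [p''.support_eq_cons, List.map_cons] at hE2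
            cases q''' with
            | nil => simp at hE2
            | @cons z z2 y h2' q'''' =>
              rw [Walk.edges_cons] at hE2
              have hh : s(v, z2) = (a'' : Sym2 V) := (List.cons_eq_cons.mp hE2).1
              rw [← hh]; simp
          have hamem : a'' ∈ (Walk.cons hadj2 p'').support := by
            rw [Walk.support_cons]
            exact List.mem_cons_of_mem _ p''.start_mem_support
          have hnaa : a ≠ a'' := fun hh => hans (hh ▸ hamem)
          have hadjaa : R.lineGraph.Adj a a'' :=
            lineGraph_adj_iff_exists.mpr ⟨hnaa, v, hva, hz2⟩
          have hres := hch a (by rw [Walk.support_cons]; exact List.mem_cons_self)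
            a'' (by rw [Walk.support_cons]; exact List.mem_cons_of_mem _ hamem) hadjaa
          rw [Walk.edges_cons, List.mem_cons] at hres
          rcases hres with heq | hmem
          · rcases Sym2.eq_iff.mp heq with ⟨-, h2⟩ | ⟨h2, -⟩
            · have ha'ns : a' ∉ p''.support := ((Walk.cons_isPath_iff _ _).mp hp').2
              exact ha'ns (h2 ▸ p''.start_mem_support)
            · exact hne h2
          · exact hans (Walk.fst_mem_support_of_mem_edges _ hmem)
        subst hvx
        have K : ∀ g : R.edgeSet, g ∈ (Walk.cons hadj2 p'').support →
            u ∈ (g : Sym2 V) → False := by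
          intro g hg hug
          have hga : g ≠ a := fun hh => hans (hh ▸ hg)
          have hadjag : R.lineGraph.Adj a g :=
            lineGraph_adj_iff_exists.mpr
              ⟨fun hh => hga hh.symm, u, by rw [hau]; simp, hug⟩
          have hres := hch a (by rw [Walk.support_cons]; exact List.mem_cons_self)
            g (by rw [Walk.support_cons]; exact List.mem_cons_of_mem _ hg) hadjag
          rw [Walk.edges_cons, List.mem_cons] at hres
          rcases hres with heq | hmem
          · rcases Sym2.eq_iff.mp heq with ⟨-, h2⟩ | ⟨h2, -⟩
            · subst h2
              rw [← hE1, Sym2.mem_iff] at hug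
              rcases hug with rfl | rfl
              · exact hvu.ne rfl
              · exact hne (Subtype.ext (by rw [hau, hE1]))
            · exact hne h2
          · exact hans (Walk.fst_mem_support_of_mem_edges _ hmem)
        have hune : u ∉ (Walk.cons h1 q''').support := by
          intro hu
          obtain ⟨e, he, hue⟩ := exists_edge_of_mem_support' _ (by simp) hu
          rw [hE] at he
          obtain ⟨g, hg, hge⟩ := List.mem_map.mp he
          exact K g hg (by rw [hge]; exact hue)
        refine ⟨u, y, Walk.cons hvu.symm (Walk.cons h1 q'''), hq'.cons hune, ?_, ?_⟩
        · rw [Walk.edges_cons, hE, Walk.support_cons, List.map_cons]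
          congr 1
          rw [hau]
          exact Sym2.eq_swap
        · intro g hg hug
          rw [Walk.support_cons, List.mem_cons] at hg
          rcases hg with rfl | hg
          · rfl
          · exact (K g hg hug).elim

end lineAux

/-- Let R be a triangle-free graph and let F be a nonempty finite set of edges of R.
Then the subgraph of the line graph L(R) induced by F is a chordless path if and only
if F is the edge set of a path in R. -/
theorem stmt14 {V : Type u} [Fintype V] (R : SimpleGraph V)
    (hTF : R.CliqueFree 3) (F : Set R.edgeSet) (hF : F.Nonempty) :
    InducesPath R.lineGraph F ↔
      ∃ (x y : V) (q : R.Walk x y), q.IsPath ∧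
        ∀ e : R.edgeSet, (e : Sym2 V) ∈ q.edges ↔ e ∈ F := by
  constructor
  · rintro ⟨a, b, p, hp, hsupp, hchord⟩
    obtain ⟨x, y, q, hq, hE, -⟩ := path_of_line' p hp
      (fun g hg h hh hadj => hchord g ((hsupp g).mp hg) h ((hsupp h).mp hh) hadj)
    refine ⟨x, y, q, hq, fun e => ?_⟩
    rw [hE, List.mem_map_of_injective Subtype.val_injective]
    exact hsupp e
  · rintro ⟨x, y, q, hq, hE⟩
    obtain ⟨e0, he0⟩ := hF
    have hlen : 1 ≤ q.length := by
      have h1 : (e0 : Sym2 V) ∈ q.edges := (hE e0).mpr he0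
      cases q with
      | nil => simp at h1
      | cons _ _ => exact Nat.succ_le_succ (Nat.zero_le _)
    obtain ⟨a, b, p, hp, hmap, hch⟩ := line_of_path' q hq hlen
    have hiff : ∀ g : R.edgeSet, g ∈ p.support ↔ g ∈ F := by
      intro g
      rw [← hE g, ← hmap, List.mem_map_of_injective Subtype.val_injective]
    exact ⟨a, b, p, hp, hiff,
      fun g hgF h hhF hadj => hch g ((hiff g).mpr hgF) h ((hiff h).mpr hhF) hadj⟩
end

section
/- Let R be a triangle-free chordless graph and let e = x1x2 and f = y1y2 be edges of R with {x1, x2} ∩ {y1, y2} = ∅. Then either R contains a hole passing through both edges e and f, or there exists a vertex z of R such that every path in R from {x1, x2} to {y1, y2} contains z. -/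
open SimpleGraph

universe u

variable {V : Type u}

namespace StmtAux
open SimpleGraph Walk


/-- Split a walk at the first vertex belonging to `S`. -/
lemma splitAtFirst {G : SimpleGraph V} {a b : V} (w : G.Walk a b) (S : Set V)
    (hhit : ∃ x ∈ w.support, x ∈ S) :
    ∃ c, c ∈ S ∧ ∃ (w₁ : G.Walk a c) (w₂ : G.Walk c b),
      w = w₁.append w₂ ∧ ∀ x ∈ w₁.support, x ∈ S → x = c := by
  classical
  induction w with
  | nil =>
    obtain ⟨x, hx, hxS⟩ := hhit
    simp only [Walk.support_nil, List.mem_singleton] at hx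
    subst hx
    exact ⟨x, hxS, Walk.nil, Walk.nil, rfl, by simp⟩
  | @cons a x b h q ih =>
    by_cases ha : a ∈ S
    · exact ⟨a, ha, Walk.nil, Walk.cons h q, rfl, by simp⟩
    · have hhit' : ∃ y ∈ q.support, y ∈ S := by
        obtain ⟨y, hy, hyS⟩ := hhit
        rcases (by simpa using hy : y = a ∨ y ∈ q.support) with rfl | hy'
        · exact absurd hyS ha
        · exact ⟨y, hy', hyS⟩
      obtain ⟨c, hcS, w₁, w₂, heq, honly⟩ := ih hhit'
      refine ⟨c, hcS, Walk.cons h w₁, w₂, by rw [Walk.cons_append, ← heq], ?_⟩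
      intro y hy hyS
      rcases (by simpa using hy : y = a ∨ y ∈ w₁.support) with rfl | hy'
      · exact absurd hyS ha
      · exact honly y hy' hyS



lemma firstHitPath {G : SimpleGraph V} {a b : V} (p : G.Walk a b) (hp : p.IsPath) (S : Set V)
    (hhit : ∃ x ∈ p.support, x ∈ S) :
    ∃ c, c ∈ S ∧ ∃ (q : G.Walk a c) (r : G.Walk c b), p = q.append r ∧ q.IsPath ∧ r.IsPath ∧
      ∀ x ∈ q.support, x ∈ S → x = c := by
  obtain ⟨c, hc, q, r, heq, honly⟩ := splitAtFirst p S hhit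
  subst heq
  exact ⟨c, hc, q, r, rfl, hp.of_append_left, hp.of_append_right, honly⟩

lemma prefix_to {G : SimpleGraph V} {a c : V} (p : G.Walk a c) {w : V} (hw : w ∈ p.support) :
    ∃ q : G.Walk a w, (∀ x ∈ q.support, x ∈ p.support) ∧ ∀ x ∈ q.edges, x ∈ p.edges := by
  obtain ⟨c', hc', q, r, heq, -⟩ := splitAtFirst p {w} ⟨w, hw, rfl⟩
  rw [Set.mem_singleton_iff] at hc'
  subst hc'
  subst heq
  refine ⟨q, ?_, ?_⟩
  · intro x hx; rw [Walk.mem_support_append_iff]; exact Or.inl hx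
  · intro x hx; rw [Walk.edges_append]; exact List.mem_append_left _ hx

lemma suffix_from {G : SimpleGraph V} {a c : V} (p : G.Walk a c) {w : V} (hw : w ∈ p.support) :
    ∃ q : G.Walk w c, (∀ x ∈ q.support, x ∈ p.support) ∧ ∀ x ∈ q.edges, x ∈ p.edges := by
  obtain ⟨c', hc', q, r, heq, -⟩ := splitAtFirst p {w} ⟨w, hw, rfl⟩
  rw [Set.mem_singleton_iff] at hc'
  subst hc'
  subst heq
  refine ⟨r, ?_, ?_⟩
  · intro x hx; rw [Walk.mem_support_append_iff]; exact Or.inr hx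
  · intro x hx; rw [Walk.edges_append]; exact List.mem_append_right _ hx

lemma prefix_avoid_end {G : SimpleGraph V} {a c : V} (p : G.Walk a c) (hp : p.IsPath) {w : V}
    (hw : w ∈ p.support) (hwc : w ≠ c) :
    ∃ q : G.Walk a w, (∀ x ∈ q.support, x ∈ p.support) ∧ (∀ x ∈ q.edges, x ∈ p.edges) ∧
      c ∉ q.support := by
  obtain ⟨c', hc', q, r, heq, -⟩ := splitAtFirst p {w} ⟨w, hw, rfl⟩
  rw [Set.mem_singleton_iff] at hc'
  subst hc'
  subst heq
  refine ⟨q, ?_, ?_, ?_⟩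
  · intro x hx; rw [Walk.mem_support_append_iff]; exact Or.inl hx
  · intro x hx; rw [Walk.edges_append]; exact List.mem_append_left _ hx
  · have hnd : (q.append r).support.Nodup := hp.support_nodup
    rw [Walk.support_append] at hnd
    have hcr : c ∈ r.support.tail := by
      have hcr' : c ∈ r.support := r.end_mem_support
      rw [r.support_eq_cons, List.mem_cons] at hcr'
      rcases hcr' with h | h
      · exact absurd h.symm hwc
      · exact h
    exact fun hcq => (List.disjoint_of_nodup_append hnd) hcq hcr

lemma suffix_avoid_start {G : SimpleGraph V} {c a : V} (p : G.Walk c a) (hp : p.IsPath) {w : V}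
    (hw : w ∈ p.support) (hwc : w ≠ c) :
    ∃ q : G.Walk w a, (∀ x ∈ q.support, x ∈ p.support) ∧ (∀ x ∈ q.edges, x ∈ p.edges) ∧
      c ∉ q.support := by
  obtain ⟨q, hs, he, hc⟩ := prefix_avoid_end p.reverse hp.reverse
    (by rwa [Walk.support_reverse, List.mem_reverse]) hwc
  refine ⟨q.reverse, ?_, ?_, ?_⟩
  · intro x hx
    rw [Walk.support_reverse, List.mem_reverse] at hx
    have := hs x hx
    rwa [Walk.support_reverse, List.mem_reverse] at this
  · intro x hx
    rw [Walk.edges_reverse, List.mem_reverse] at hx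
    have := he x hx
    rwa [Walk.edges_reverse, List.mem_reverse] at this
  · rwa [Walk.support_reverse, List.mem_reverse]



def AvoidH (G : SimpleGraph V) (X Y : Set V) : Prop :=
  ∀ z : V, ∃ a ∈ X, ∃ b ∈ Y, ∃ p : G.Walk a b, p.IsPath ∧ z ∉ p.support

def DisPair (G : SimpleGraph V) (X Y : Set V) : Prop :=
  ∃ a ∈ X, ∃ b ∈ Y, ∃ a' ∈ X, ∃ b' ∈ Y, ∃ (p : G.Walk a b) (q : G.Walk a' b'),
    p.IsPath ∧ q.IsPath ∧ ∀ v ∈ p.support, v ∉ q.support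

def Aset (G : SimpleGraph V) (X : Set V) (s : V) (e₀ : Sym2 V) : Set V :=
  {w | ∃ a ∈ X, ∃ q : (G.deleteEdges {e₀}).Walk a w, s ∉ q.support}

def Bset (G : SimpleGraph V) (Y : Set V) (s : V) (e₀ : Sym2 V) : Set V :=
  {w | ∃ b ∈ Y, ∃ q : (G.deleteEdges {e₀}).Walk w b, s ∉ q.support}

lemma transfer_del {G : SimpleGraph V} {e₀ : Sym2 V} {a b : V} (p : G.Walk a b)
    (h : e₀ ∉ p.edges) :
    ∃ q : (G.deleteEdges {e₀}).Walk a b, q.support = p.support ∧ q.edges = p.edges := by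
  refine ⟨p.transfer _ (fun f hf => ?_), Walk.support_transfer _ _, Walk.edges_transfer _ _⟩
  rw [edgeSet_deleteEdges]
  exact ⟨p.edges_subset_edgeSet hf, fun hf' => h ((Set.mem_singleton_iff.mp hf') ▸ hf)⟩

lemma transfer_up {G H : SimpleGraph V} (hle : G ≤ H) {a b : V} (p : G.Walk a b) :
    ∃ q : H.Walk a b, q.support = p.support ∧ q.edges = p.edges :=
  ⟨p.transfer H (fun f hf => edgeSet_mono hle (p.edges_subset_edgeSet hf)),
    Walk.support_transfer _ _, Walk.edges_transfer _ _⟩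

lemma AvoidH.rev {G : SimpleGraph V} {X Y : Set V} (h : AvoidH G X Y) : AvoidH G Y X := by
  intro z
  obtain ⟨a, ha, b, hb, p, hp, hz⟩ := h z
  exact ⟨b, hb, a, ha, p.reverse, hp.reverse,
    by rwa [Walk.support_reverse, List.mem_reverse]⟩

lemma DisPair.rev {G : SimpleGraph V} {X Y : Set V} (h : DisPair G X Y) : DisPair G Y X := by
  obtain ⟨a, ha, b, hb, a', ha', b', hb', p, q, hp, hq, hd⟩ := h
  refine ⟨b, hb, a, ha, b', hb', a', ha', p.reverse, q.reverse, hp.reverse, hq.reverse, ?_⟩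
  intro w hw
  rw [Walk.support_reverse, List.mem_reverse] at hw ⊢
  exact hd w hw

lemma DisPair.mono {G H : SimpleGraph V} {X Y : Set V} (hle : G ≤ H) (h : DisPair G X Y) :
    DisPair H X Y := by
  obtain ⟨a, ha, b, hb, a', ha', b', hb', p, q, hp, hq, hd⟩ := h
  obtain ⟨p', hps, -⟩ := transfer_up hle p
  obtain ⟨q', hqs, -⟩ := transfer_up hle q
  refine ⟨a, ha, b, hb, a', ha', b', hb', p', q', ?_, ?_, ?_⟩
  · rw [Walk.isPath_def, hps]; exact hp.support_nodup
  · rw [Walk.isPath_def, hqs]; exact hq.support_nodup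
  · intro w hw; rw [hps] at hw; rw [hqs]; exact hd w hw

lemma not_mem_both {G : SimpleGraph V} {X Y : Set V} {s : V} {e₀ : Sym2 V}
    (hsep : ∀ a ∈ X, ∀ b ∈ Y, ∀ w : (G.deleteEdges {e₀}).Walk a b, s ∈ w.support)
    {w : V} (hA : w ∈ Aset G X s e₀) (hB : w ∈ Bset G Y s e₀) : False := by
  obtain ⟨a, ha, q, hq⟩ := hA
  obtain ⟨b, hb, r, hr⟩ := hB
  have := hsep a ha b hb (q.append r)
  rw [Walk.mem_support_append_iff] at this
  rcases this with h | h
  · exact hq h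
  · exact hr h

lemma mem_Bset_of_mem_Aset {G : SimpleGraph V} {X : Set V} {s : V} {e₀ : Sym2 V} {w : V}
    (h : w ∈ Aset G X s e₀) : w ∈ Bset G X s e₀ := by
  obtain ⟨a, ha, q, hq⟩ := h
  exact ⟨a, ha, q.reverse, by rwa [Walk.support_reverse, List.mem_reverse]⟩


lemma sideHz {G : SimpleGraph V} {X Y : Set V} {s u v : V} {e₀ : Sym2 V}
    (he₀ : e₀ = s(u, v)) (hsu : s ≠ u) (huvne : u ≠ v)
    (hsep : ∀ a ∈ X, ∀ b ∈ Y, ∀ w : (G.deleteEdges {e₀}).Walk a b, s ∈ w.support)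
    (hA : AvoidH G X Y) (hvB : v ∈ Bset G Y s e₀) :
    AvoidH (G.deleteEdges {e₀}) X {s, u} := by
  intro t
  obtain ⟨a, ha, b, hb, P, hP, htP⟩ := hA t
  have hhit : ∃ x ∈ P.support, x ∈ ({s, u} : Set V) := by
    by_cases hsP : s ∈ P.support
    · exact ⟨s, hsP, Or.inl rfl⟩
    · by_cases he : e₀ ∈ P.edges
      · exact ⟨u, by rw [he₀] at he; exact P.fst_mem_support_of_mem_edges he, Or.inr rfl⟩
      · obtain ⟨P', hPs, -⟩ := transfer_del P he
        exact absurd (by rw [← hPs]; exact hsep a ha b hb P') hsP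
  obtain ⟨c, hc, q, r, heq, hq, hr, honly⟩ := firstHitPath P hP _ hhit
  have hqsub : ∀ x ∈ q.support, x ∈ P.support := fun x hx => by
    rw [heq, Walk.mem_support_append_iff]; exact Or.inl hx
  by_cases heq₀ : e₀ ∈ q.edges
  · exfalso
    have huq : u ∈ q.support := by
      rw [he₀] at heq₀; exact q.fst_mem_support_of_mem_edges heq₀
    have hvq : v ∈ q.support := by
      rw [he₀] at heq₀; exact q.snd_mem_support_of_mem_edges heq₀
    have hcu : u = c := honly u huq (Or.inr rfl)
    obtain ⟨q', hq's, hq'e, hcq'⟩ := prefix_avoid_end q hq hvq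
      (fun h => huvne (hcu.trans h.symm))
    have he' : e₀ ∉ q'.edges := fun h => hcq' (by
      rw [he₀] at h
      exact hcu ▸ Walk.fst_mem_support_of_mem_edges q' h)
    obtain ⟨q'', hq''s, -⟩ := transfer_del q' he'
    have hsq' : s ∉ q'.support := fun h =>
      hsu ((honly s (hq's s h) (Or.inl rfl)).trans hcu.symm)
    exact not_mem_both hsep ⟨a, ha, q'', by rw [hq''s]; exact hsq'⟩ hvB
  · obtain ⟨q', hq's, -⟩ := transfer_del q heq₀
    refine ⟨a, ha, c, hc, q', ?_, ?_⟩
    · rw [Walk.isPath_def, hq's]; exact hq.support_nodup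
    · rw [hq's]; exact fun h => htP (hqsub t h)

lemma orient {G : SimpleGraph V} {X Y : Set V} {s u v : V} {e₀ : Sym2 V}
    (he₀ : e₀ = s(u, v)) (huv : G.Adj u v)
    (hsep : ∀ a ∈ X, ∀ b ∈ Y, ∀ w : (G.deleteEdges {e₀}).Walk a b, s ∈ w.support)
    (hA : AvoidH G X Y) :
    ∃ c d, e₀ = s(c, d) ∧ G.Adj c d ∧ c ∈ Aset G X s e₀ ∧ d ∈ Bset G Y s e₀ := by
  obtain ⟨a, ha, b, hb, P, hP, hsP⟩ := hA s
  have he : e₀ ∈ P.edges := by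
    by_contra he
    obtain ⟨P', hPs, -⟩ := transfer_del P he
    exact hsP (by rw [← hPs]; exact hsep a ha b hb P')
  have huP : u ∈ P.support := by rw [he₀] at he; exact P.fst_mem_support_of_mem_edges he
  obtain ⟨c, hc, q, r, heq, hq, hr, honly⟩ := firstHitPath P hP {u, v} ⟨u, huP, Or.inl rfl⟩
  obtain ⟨d, hde₀, hdmem, hdc⟩ :
      ∃ d, e₀ = s(c, d) ∧ d ∈ ({u, v} : Set V) ∧ d ≠ c := by
    rcases hc with rfl | rfl
    · exact ⟨v, he₀, Or.inr rfl, fun h => huv.ne h.symm⟩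
    · exact ⟨u, he₀.trans Sym2.eq_swap, Or.inl rfl, huv.ne⟩
  have hadj : G.Adj c d := by
    rw [← SimpleGraph.mem_edgeSet, ← hde₀]
    exact P.edges_subset_edgeSet he
  have hdP : d ∈ P.support := by
    rw [hde₀] at he; exact P.snd_mem_support_of_mem_edges he
  have hqsub : ∀ x ∈ q.support, x ∈ P.support := fun x hx => by
    rw [heq, Walk.mem_support_append_iff]; exact Or.inl hx
  have hce : e₀ ∉ q.edges := by
    intro h
    have hd' : d ∈ q.support := by
      rw [hde₀] at h; exact q.snd_mem_support_of_mem_edges h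
    exact hdc (honly d hd' hdmem)
  obtain ⟨q', hq's, -⟩ := transfer_del q hce
  have hsq : s ∉ q.support := fun h => hsP (hqsub s h)
  have hcA : c ∈ Aset G X s e₀ := ⟨a, ha, q', by rw [hq's]; exact hsq⟩
  have hdq : d ∉ q.support := fun h => hdc (honly d h hdmem)
  have hdr : d ∈ r.support := by
    have := hdP
    rw [heq, Walk.mem_support_append_iff] at this
    tauto
  obtain ⟨r', hr's, hr'e, hcr'⟩ := suffix_avoid_start r hr hdr hdc
  have hre : e₀ ∉ r'.edges := fun h => hcr' (by
    rw [hde₀] at h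
    exact Walk.fst_mem_support_of_mem_edges r' h)
  obtain ⟨r'', hr''s, -⟩ := transfer_del r' hre
  have hsr : s ∉ r'.support := fun h => hsP (by
    rw [heq, Walk.mem_support_append_iff]
    exact Or.inr (hr's s h))
  exact ⟨c, d, hde₀, hadj, hcA, ⟨b, hb, r'', by rw [hr''s]; exact hsr⟩⟩

lemma combine2core {G : SimpleGraph V} {X Y : Set V} {s u v : V} {e₀ : Sym2 V}
    (huv : G.Adj u v)
    (hsep : ∀ a ∈ X, ∀ b ∈ Y, ∀ w : (G.deleteEdges {e₀}).Walk a b, s ∈ w.support)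
    {aU aS bS bV : V} (haU : aU ∈ X) (haS : aS ∈ X) (hbS : bS ∈ Y) (hbV : bV ∈ Y)
    {XpU : (G.deleteEdges {e₀}).Walk aU u} {XpS : (G.deleteEdges {e₀}).Walk aS s}
    {YpS : (G.deleteEdges {e₀}).Walk s bS} {YpV : (G.deleteEdges {e₀}).Walk v bV}
    (hXpU : XpU.IsPath) (hXpS : XpS.IsPath) (hYpS : YpS.IsPath) (hYpV : YpV.IsPath)
    (hdX : ∀ w ∈ XpU.support, w ∉ XpS.support)
    (hdY : ∀ w ∈ YpS.support, w ∉ YpV.support) :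
    DisPair G X Y := by
  classical
  have hsXU : s ∉ XpU.support := fun h => hdX s h XpS.end_mem_support
  have hsYV : s ∉ YpV.support := hdY s YpS.start_mem_support
  have hXUA : ∀ w ∈ XpU.support, w ∈ Aset G X s e₀ := by
    intro w hw
    obtain ⟨q, hqs, -⟩ := prefix_to XpU hw
    exact ⟨aU, haU, q, fun h => hsXU (hqs s h)⟩
  have hYVB : ∀ w ∈ YpV.support, w ∈ Bset G Y s e₀ := by
    intro w hw
    obtain ⟨q, hqs, -⟩ := suffix_from YpV hw
    exact ⟨bV, hbV, q, fun h => hsYV (hqs s h)⟩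
  have hXSA : ∀ w ∈ XpS.support, w ≠ s → w ∈ Aset G X s e₀ := by
    intro w hw hws
    obtain ⟨q, -, -, hsq⟩ := prefix_avoid_end XpS hXpS hw hws
    exact ⟨aS, haS, q, hsq⟩
  have hYSB : ∀ w ∈ YpS.support, w ≠ s → w ∈ Bset G Y s e₀ := by
    intro w hw hws
    obtain ⟨q, -, -, hsq⟩ := suffix_avoid_start YpS hYpS hw hws
    exact ⟨bS, hbS, q, hsq⟩
  have hle : G.deleteEdges {e₀} ≤ G := deleteEdges_le _
  obtain ⟨XpU', hXUs, -⟩ := transfer_up hle XpU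
  obtain ⟨XpS', hXSs, -⟩ := transfer_up hle XpS
  obtain ⟨YpS', hYSs, -⟩ := transfer_up hle YpS
  obtain ⟨YpV', hYVs, -⟩ := transfer_up hle YpV
  have hQd : ∀ w ∈ (XpU'.append (Walk.cons huv YpV')).support,
      w ∉ (XpS'.append YpS').support := by
    intro w hw hw'
    have h1 : w ∈ XpU.support ∨ w ∈ YpV.support := by
      rw [Walk.mem_support_append_iff] at hw
      rcases hw with h | h
      · exact Or.inl (hXUs ▸ h)
      · rw [Walk.support_cons, List.mem_cons] at h
        rcases h with rfl | h
        · exact Or.inl XpU.end_mem_support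
        · exact Or.inr (hYVs ▸ h)
    have h2 : w ∈ XpS.support ∨ w ∈ YpS.support := by
      rw [Walk.mem_support_append_iff] at hw'
      rcases hw' with h | h
      · exact Or.inl (hXSs ▸ h)
      · exact Or.inr (hYSs ▸ h)
    rcases h1 with h1 | h1 <;> rcases h2 with h2 | h2
    · exact hdX w h1 h2
    · by_cases hws : w = s
      · exact hsXU (hws ▸ h1)
      · exact not_mem_both hsep (hXUA w h1) (hYSB w h2 hws)
    · by_cases hws : w = s
      · exact hsYV (hws ▸ h1)
      · exact not_mem_both hsep (hXSA w h2 hws) (hYVB w h1)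
    · exact hdY w h2 h1
  refine ⟨aU, haU, bV, hbV, aS, haS, bS, hbS,
    ((XpU'.append (Walk.cons huv YpV')).toPath : G.Walk aU bV),
    ((XpS'.append YpS').toPath : G.Walk aS bS),
    (XpU'.append (Walk.cons huv YpV')).toPath.2, (XpS'.append YpS').toPath.2, ?_⟩
  intro w hw hw'
  exact hQd w (Walk.support_toPath_subset _ hw) (Walk.support_toPath_subset _ hw')

lemma combine2 {G : SimpleGraph V} {X Y : Set V} {s u v : V} {e₀ : Sym2 V}
    (huv : G.Adj u v) (hsu : s ≠ u) (hsv : s ≠ v)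
    (hsep : ∀ a ∈ X, ∀ b ∈ Y, ∀ w : (G.deleteEdges {e₀}).Walk a b, s ∈ w.support)
    (D1 : DisPair (G.deleteEdges {e₀}) X {s, u})
    (D2 : DisPair (G.deleteEdges {e₀}) {s, v} Y) :
    DisPair G X Y := by
  obtain ⟨a₁, ha₁, c₁, hc₁, a₂, ha₂, c₂, hc₂, p₁, p₂, hp₁, hp₂, hd₁⟩ := D1
  obtain ⟨f₁, hf₁, b₁, hb₁, f₂, hf₂, b₂, hb₂, q₁, q₂, hq₁, hq₂, hd₂⟩ := D2
  simp only [Set.mem_insert_iff, Set.mem_singleton_iff] at hc₁ hc₂ hf₁ hf₂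
  have hc12 : c₁ ≠ c₂ := fun h => hd₁ c₁ p₁.end_mem_support (h ▸ p₂.end_mem_support)
  have hf12 : f₁ ≠ f₂ := fun h => hd₂ f₁ q₁.start_mem_support (h ▸ q₂.start_mem_support)
  obtain ⟨aS, haS, aU, haU, XpS, XpU, hXpS, hXpU, hdX⟩ :
      ∃ aS, aS ∈ X ∧ ∃ aU, aU ∈ X ∧ ∃ (XpS : (G.deleteEdges {e₀}).Walk aS s)
        (XpU : (G.deleteEdges {e₀}).Walk aU u), XpS.IsPath ∧ XpU.IsPath ∧
        ∀ w ∈ XpU.support, w ∉ XpS.support := by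
    rcases hc₁ with rfl | rfl
    · rcases hc₂ with h | rfl
      · exact absurd h.symm hc12
      · exact ⟨a₁, ha₁, a₂, ha₂, p₁, p₂, hp₁, hp₂, fun w h h' => hd₁ w h' h⟩
    · rcases hc₂ with rfl | h
      · exact ⟨a₂, ha₂, a₁, ha₁, p₂, p₁, hp₂, hp₁, hd₁⟩
      · exact absurd h.symm hc12
  obtain ⟨bS, hbS, bV, hbV, YpS, YpV, hYpS, hYpV, hdY⟩ :
      ∃ bS, bS ∈ Y ∧ ∃ bV, bV ∈ Y ∧ ∃ (YpS : (G.deleteEdges {e₀}).Walk s bS)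
        (YpV : (G.deleteEdges {e₀}).Walk v bV), YpS.IsPath ∧ YpV.IsPath ∧
        ∀ w ∈ YpS.support, w ∉ YpV.support := by
    rcases hf₁ with rfl | rfl
    · rcases hf₂ with h | rfl
      · exact absurd h.symm hf12
      · exact ⟨b₁, hb₁, b₂, hb₂, q₁, q₂, hq₁, hq₂, hd₂⟩
    · rcases hf₂ with rfl | h
      · exact ⟨b₂, hb₂, b₁, hb₁, q₂, q₁, hq₂, hq₁, fun w h h' => hd₂ w h' h⟩
      · exact absurd h.symm hf12
  exact combine2core huv hsep haU haS hbS hbV hXpU hXpS hYpS hYpV hdX hdY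

lemma noEdges [Nonempty V] {G : SimpleGraph V} {X Y : Set V} (hE : G.edgeSet = ∅)
    (hA : AvoidH G X Y) : DisPair G X Y := by
  have key : ∀ {a b : V} (p : G.Walk a b), a = b ∧ p.support = [a] := by
    intro a b p
    cases p with
    | nil => simp
    | cons h q => exact absurd (G.mem_edgeSet.2 h) (hE ▸ Set.notMem_empty _)
  obtain ⟨a, ha, b, hb, p, hp, -⟩ := hA (Classical.arbitrary V)
  obtain ⟨rfl, -⟩ := key p
  obtain ⟨a', ha', b', hb', p', hp', hz'⟩ := hA a
  obtain ⟨rfl, hsupp'⟩ := key p'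
  have hne : a' ≠ a := by
    intro h
    exact hz' (by rw [hsupp', h]; exact List.mem_singleton.2 rfl)
  refine ⟨a, ha, a, hb, a', ha', a', hb', Walk.nil, Walk.nil, Walk.IsPath.nil, Walk.IsPath.nil, ?_⟩
  intro w hw hw'
  simp only [Walk.support_nil, List.mem_singleton] at hw hw'
  exact hne (hw'.symm.trans hw)

lemma menger2 [Fintype V] [Nonempty V] :
    ∀ (n : ℕ) (G : SimpleGraph V) (X Y : Set V),
      G.edgeSet.ncard ≤ n → AvoidH G X Y → DisPair G X Y := by
  intro n
  induction n with
  | zero =>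
    intro G X Y hn hA
    refine noEdges ?_ hA
    have := Set.ncard_eq_zero (s := G.edgeSet) (G.edgeSet.toFinite)
    exact this.mp (Nat.le_zero.mp hn)
  | succ n IH =>
    intro G X Y hn hA
    classical
    by_cases hE : G.edgeSet = ∅
    · exact noEdges hE hA
    · obtain ⟨u, v, huv⟩ : ∃ u v, G.Adj u v := by
        obtain ⟨e, he⟩ := Set.nonempty_iff_ne_empty.2 hE
        revert he
        refine Sym2.ind (fun x y he => ?_) e
        exact ⟨x, y, G.mem_edgeSet.1 he⟩
      have hmem : (s(u, v) : Sym2 V) ∈ G.edgeSet := G.mem_edgeSet.2 huv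
      have hcard' : (G.deleteEdges {s(u, v)}).edgeSet.ncard ≤ n := by
        rw [edgeSet_deleteEdges]
        have hlt : (G.edgeSet \ {s(u, v)}).ncard < G.edgeSet.ncard :=
          Set.ncard_diff_singleton_lt_of_mem hmem (G.edgeSet.toFinite)
        omega
      have hle : G.deleteEdges {s(u, v)} ≤ G := deleteEdges_le _
      by_cases hA' : AvoidH (G.deleteEdges {s(u, v)}) X Y
      · exact (IH (G.deleteEdges {s(u, v)}) X Y hcard' hA').mono hle
      · have hs : ∃ s : V, ∀ a ∈ X, ∀ b ∈ Y,
            ∀ w : (G.deleteEdges {s(u, v)}).Walk a b, s ∈ w.support := by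
          unfold AvoidH at hA'
          push_neg at hA'
          obtain ⟨z, hz⟩ := hA'
          refine ⟨z, fun a ha b hb w => ?_⟩
          have h1 := hz a ha b hb (w.toPath : (G.deleteEdges {s(u, v)}).Walk a b)
            (w.toPath).2
          exact Walk.support_toPath_subset w h1
        obtain ⟨s, hsep⟩ := hs
        have hsu : s ≠ u := by
          obtain ⟨a, ha, b, hb, P, hP, hu⟩ := hA u
          have he : (s(u, v) : Sym2 V) ∉ P.edges := fun h =>
            hu (P.fst_mem_support_of_mem_edges h)
          obtain ⟨P', hPs, -⟩ := transfer_del P he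
          have := hsep a ha b hb P'
          rw [hPs] at this
          exact fun h => hu (h ▸ this)
        have hsv : s ≠ v := by
          obtain ⟨a, ha, b, hb, P, hP, hv⟩ := hA v
          have he : (s(u, v) : Sym2 V) ∉ P.edges := fun h =>
            hv (P.snd_mem_support_of_mem_edges h)
          obtain ⟨P', hPs, -⟩ := transfer_del P he
          have := hsep a ha b hb P'
          rw [hPs] at this
          exact fun h => hv (h ▸ this)
        obtain ⟨c, d, hcd, hadj, hcA, hdB⟩ := orient rfl huv hsep hA
        have hmemcd : (c = u ∧ d = v) ∨ (c = v ∧ d = u) := by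
          have := hcd
          rw [Sym2.eq_iff] at this
          tauto
        have hsc : s ≠ c := by rcases hmemcd with ⟨rfl, -⟩ | ⟨rfl, -⟩ <;> assumption
        have hsd : s ≠ d := by rcases hmemcd with ⟨-, rfl⟩ | ⟨-, rfl⟩ <;> assumption
        have hsep_rev : ∀ a ∈ Y, ∀ b ∈ X,
            ∀ w : (G.deleteEdges {s(u, v)}).Walk a b, s ∈ w.support := by
          intro a ha b hb w
          have := hsep b hb a ha w.reverse
          rwa [Walk.support_reverse, List.mem_reverse] at this
        have hD1 : DisPair (G.deleteEdges {s(u, v)}) X {s, c} :=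
          IH _ X {s, c} hcard' (sideHz hcd hsc hadj.ne hsep hA hdB)
        have hD2 : DisPair (G.deleteEdges {s(u, v)}) Y {s, d} :=
          IH _ Y {s, d} hcard'
            (sideHz (hcd.trans Sym2.eq_swap) hsd hadj.ne.symm hsep_rev hA.rev
              (mem_Bset_of_mem_Aset hcA))
        exact combine2 hadj hsc hsd hsep hD1 hD2.rev

lemma build_hole {R : SimpleGraph V} (hCh : ChordlessGraph R)
    {x₁ x₂ y₁ y₂ : V} (he : R.Adj x₁ x₂) (hf : R.Adj y₁ y₂)
    (h₁ : x₁ ≠ y₁) (h₂ : x₁ ≠ y₂) (h₃ : x₂ ≠ y₁) (h₄ : x₂ ≠ y₂)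
    (p : R.Walk x₁ y₁) (q : R.Walk x₂ y₂) (hp : p.IsPath) (hq : q.IsPath)
    (hd : ∀ w ∈ p.support, w ∉ q.support) :
    ∃ (w : V) (c : R.Walk w w), IsHole R c ∧ s(x₁, x₂) ∈ c.edges ∧ s(y₁, y₂) ∈ c.edges := by
  have hsupp : (p.append (Walk.cons hf q.reverse)).support
      = p.support ++ q.reverse.support := by
    rw [Walk.support_append, Walk.support_cons, List.tail_cons]
  have hnd : (p.append (Walk.cons hf q.reverse)).support.Nodup := by
    rw [hsupp]
    refine List.Nodup.append hp.support_nodup ?_ ?_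
    · rw [Walk.support_reverse]
      exact List.nodup_reverse.2 hq.support_nodup
    · intro a ha ha'
      rw [Walk.support_reverse, List.mem_reverse] at ha'
      exact hd a ha ha'
  have hP₀ : (p.append (Walk.cons hf q.reverse)).IsPath := by
    rw [Walk.isPath_def]; exact hnd
  have hedge : s(x₂, x₁) ∉ (p.append (Walk.cons hf q.reverse)).edges := by
    intro h
    rw [Walk.edges_append, List.mem_append] at h
    rcases h with h | h
    · exact hd x₂ (p.fst_mem_support_of_mem_edges h) q.start_mem_support
    · rw [Walk.edges_cons, List.mem_cons] at h
      rcases h with h | h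
      · rw [Sym2.eq_iff] at h
        rcases h with ⟨h', h''⟩ | ⟨h', h''⟩
        · exact h₂ h''
        · exact h₁ h''
      · have : x₁ ∈ q.reverse.support := Walk.snd_mem_support_of_mem_edges _ h
        rw [Walk.support_reverse, List.mem_reverse] at this
        exact hd x₁ p.start_mem_support this
  have hcyc : ((p.append (Walk.cons hf q.reverse)).cons he.symm).IsCycle :=
    (Walk.cons_isCycle_iff _ he.symm).2 ⟨hP₀, hedge⟩
  refine ⟨x₂, (p.append (Walk.cons hf q.reverse)).cons he.symm, ⟨hcyc, ?_, ?_⟩, ?_, ?_⟩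
  · have hp1 : 1 ≤ p.length := Nat.one_le_iff_ne_zero.2
      (fun h0 => h₁ (Walk.eq_of_length_eq_zero h0))
    have hq1 : 1 ≤ q.length := Nat.one_le_iff_ne_zero.2
      (fun h0 => h₄ (Walk.eq_of_length_eq_zero h0))
    rw [Walk.length_cons, Walk.length_append, Walk.length_cons, Walk.length_reverse]
    omega
  · intro x hx y hy hxy
    exact hCh x₂ _ hcyc x hx y hy hxy
  · rw [Walk.edges_cons]
    rw [show (s(x₁, x₂) : Sym2 V) = s(x₂, x₁) from Sym2.eq_swap]
    exact List.mem_cons_self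
  · rw [Walk.edges_cons]
    refine List.mem_cons_of_mem _ ?_
    rw [Walk.edges_append, List.mem_append]
    exact Or.inr (by rw [Walk.edges_cons]; exact List.mem_cons_self)

end StmtAux

/-- Let R be a triangle-free chordless graph and let e = x₁x₂ and f = y₁y₂ be edges
of R with {x₁, x₂} ∩ {y₁, y₂} = ∅. Then either R contains a hole passing through both
edges e and f, or there exists a vertex z of R such that every path in R from
{x₁, x₂} to {y₁, y₂} contains z. -/
theorem stmt15 {V : Type u} [Fintype V] (R : SimpleGraph V)
    (hTF : R.CliqueFree 3) (hCh : ChordlessGraph R)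
    (x₁ x₂ y₁ y₂ : V) (he : R.Adj x₁ x₂) (hf : R.Adj y₁ y₂)
    (h₁ : x₁ ≠ y₁) (h₂ : x₁ ≠ y₂) (h₃ : x₂ ≠ y₁) (h₄ : x₂ ≠ y₂) :
    (∃ (w : V) (c : R.Walk w w), IsHole R c ∧
        s(x₁, x₂) ∈ c.edges ∧ s(y₁, y₂) ∈ c.edges) ∨
    (∃ z : V, ∀ a ∈ ({x₁, x₂} : Set V), ∀ b ∈ ({y₁, y₂} : Set V),
        ∀ q : R.Walk a b, q.IsPath → z ∈ q.support) := by
  classical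
  by_cases hz : ∃ z : V, ∀ a ∈ ({x₁, x₂} : Set V), ∀ b ∈ ({y₁, y₂} : Set V),
      ∀ q : R.Walk a b, q.IsPath → z ∈ q.support
  · exact Or.inr hz
  · left
    push_neg at hz
    have hA : StmtAux.AvoidH R {x₁, x₂} {y₁, y₂} := by
      intro z
      obtain ⟨a, ha, b, hb, q, hq, hzq⟩ := hz z
      exact ⟨a, ha, b, hb, q, hq, hzq⟩
    have : Nonempty V := ⟨x₁⟩
    obtain ⟨a, ha, b, hb, a', ha', b', hb', p, q, hp, hq, hd⟩ :=
      StmtAux.menger2 (R.edgeSet.ncard) R {x₁, x₂} {y₁, y₂} le_rfl hA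
    simp only [Set.mem_insert_iff, Set.mem_singleton_iff] at ha hb ha' hb'
    have haa : a ≠ a' := fun h => hd a p.start_mem_support (h ▸ q.start_mem_support)
    have hbb : b ≠ b' := fun h => hd b p.end_mem_support (h ▸ q.end_mem_support)
    have main : ∀ {u1 u2 w1 w2 : V}, R.Adj u1 u2 → R.Adj w1 w2 → u1 ≠ w1 → u1 ≠ w2 →
        u2 ≠ w1 → u2 ≠ w2 → a = u1 → b = w1 → a' = u2 → b' = w2 →
        ∃ (w : V) (c : R.Walk w w), IsHole R c ∧ s(u1, u2) ∈ c.edges ∧ s(w1, w2) ∈ c.edges := by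
      intro u1 u2 w1 w2 he' hf' k₁ k₂ k₃ k₄ e1 e2 e3 e4
      refine StmtAux.build_hole hCh he' hf' k₁ k₂ k₃ k₄ (p.copy e1 e2) (q.copy e3 e4) ?_ ?_ ?_
      · rwa [Walk.isPath_copy]
      · rwa [Walk.isPath_copy]
      · intro w hw
        rw [Walk.support_copy] at hw ⊢
        exact hd w hw
    rcases ha with ha | ha <;> rcases hb with hb | hb
    · have ha2 : a' = x₂ := ha'.resolve_left (fun h => haa (ha.trans h.symm))
      have hb2 : b' = y₂ := hb'.resolve_left (fun h => hbb (hb.trans h.symm))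
      exact main he hf h₁ h₂ h₃ h₄ ha hb ha2 hb2
    · have ha2 : a' = x₂ := ha'.resolve_left (fun h => haa (ha.trans h.symm))
      have hb2 : b' = y₁ := hb'.resolve_right (fun h => hbb (hb.trans h.symm))
      rw [show (s(y₁, y₂) : Sym2 V) = s(y₂, y₁) from Sym2.eq_swap]
      exact main he hf.symm h₂ h₁ h₄ h₃ ha hb ha2 hb2
    · have ha2 : a' = x₁ := ha'.resolve_right (fun h => haa (ha.trans h.symm))
      have hb2 : b' = y₂ := hb'.resolve_left (fun h => hbb (hb.trans h.symm))
      rw [show (s(x₁, x₂) : Sym2 V) = s(x₂, x₁) from Sym2.eq_swap]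
      exact main he.symm hf h₃ h₄ h₁ h₂ ha hb ha2 hb2
    · have ha2 : a' = x₁ := ha'.resolve_right (fun h => haa (ha.trans h.symm))
      have hb2 : b' = y₁ := hb'.resolve_right (fun h => hbb (hb.trans h.symm))
      rw [show (s(x₁, x₂) : Sym2 V) = s(x₂, x₁) from Sym2.eq_swap,
        show (s(y₁, y₂) : Sym2 V) = s(y₂, y₁) from Sym2.eq_swap]
      exact main he.symm hf.symm h₄ h₃ h₂ h₁ ha hb ha2 hb2
end
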